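/- arXiv:2010.15089 — 2 statements merged into one kernel-verified Lean document; each statement's English description precedes it below -/
import Mathlib

section
/- Let n ≥ 1, let Ω ⊆ 𝕆_sⁿ be an axially symmetric slice-domain, and let f : Ω → 𝕆 be weak slice regular. Then f is a slice function. -/
/-! Octonions via the Cayley–Dickson construction on the quaternions,
the n-dimensional quadratic cone, the slice topology, and slice regularity. -/

noncomputable section
open Quaternion Topology

/-- The octonions, as `ℍ × ℍ` with the (L²) Euclidean norm and
Cayley–Dickson multiplication. -/
abbrev Oct : Type := WithLp 2 (ℍ × ℍ)

namespace Oct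

def c1 (p : Oct) : ℍ := (WithLp.equiv 2 (ℍ × ℍ) p).1
def c2 (p : Oct) : ℍ := (WithLp.equiv 2 (ℍ × ℍ) p).2
def mk (a b : ℍ) : Oct := (WithLp.equiv 2 (ℍ × ℍ)).symm (a, b)

instance : One Oct := ⟨mk 1 0⟩

/-- Cayley–Dickson multiplication. -/
instance : Mul Oct :=
  ⟨fun p q => mk (c1 p * c1 q - star (c2 q) * c2 p) (c2 q * c1 p + c2 p * star (c1 q))⟩

/-- Octonionic conjugation. -/
instance : Star Oct := ⟨fun p => mk (star (c1 p)) (-(c2 p))⟩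

/-- Inverse: `p⁻¹ = ‖p‖⁻² • (star p)` (so `0⁻¹ = 0`). -/
instance : Inv Oct := ⟨fun p => (‖p‖ ^ 2)⁻¹ • star p⟩

/-- The real inner product on `𝕆 ≅ ℝ⁸`, via polarization. -/
def oinner (p q : Oct) : ℝ := (1 / 4) * (‖p + q‖ ^ 2 - ‖p - q‖ ^ 2)

/-- The sphere `𝕊` of imaginary units of the octonions. -/
def Sph : Set Oct := {I | I * I = -1}

/-- The slice complex plane `ℂ_I = ℝ + ℝ I ⊆ 𝕆`. -/
def CI (I : Oct) : Set Oct := {z | ∃ s t : ℝ, z = s • (1 : Oct) + t • I}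

end Oct

open Oct

/-- The point `x + y I ∈ ℂ_Iⁿ ⊆ 𝕆ⁿ`. -/
def aff {n : ℕ} (x y : Fin n → ℝ) (I : Oct) : Fin n → Oct :=
  fun m => x m • (1 : Oct) + y m • I

/-- The embedding `ℝⁿ ⊆ 𝕆ⁿ`. -/
def ofRealn {n : ℕ} (x : Fin n → ℝ) : Fin n → Oct := fun m => x m • (1 : Oct)

/-- The slice `ℂ_Iⁿ ⊆ 𝕆ⁿ`. -/
def slicen (n : ℕ) (I : Oct) : Set (Fin n → Oct) := {q | ∃ x y : Fin n → ℝ, q = aff x y I}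

/-- The `n`-dimensional quadratic cone `𝕆ₛⁿ = ⋃_{I ∈ 𝕊} ℂ_Iⁿ`. -/
def cone (n : ℕ) : Set (Fin n → Oct) := ⋃ I ∈ Sph, slicen n I

/-- The slice topology `τ_s`: a set is open iff its trace on every slice `ℂ_Iⁿ`
is open (expressed via the canonical parametrizations `(x,y) ↦ x + yI`). -/
def τs (n : ℕ) : TopologicalSpace (Fin n → Oct) :=
  ⨆ I : Sph, TopologicalSpace.coinduced
    (fun p : (Fin n → ℝ) × (Fin n → ℝ) => aff p.1 p.2 I.1) inferInstance

/-- A slice-open subset of the quadratic cone. -/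
def SliceOpen (n : ℕ) (Ω : Set (Fin n → Oct)) : Prop :=
  Ω ⊆ cone n ∧ IsOpen[τs n] Ω

/-- A slice-domain: a nonempty slice-connected slice-open subset of the cone. -/
def SliceDomain (n : ℕ) (Ω : Set (Fin n → Oct)) : Prop :=
  SliceOpen n Ω ∧ @IsConnected _ (τs n) Ω

/-- Real-connectedness: `Ω ∩ ℝⁿ` is a (pre)connected subset of `ℝⁿ`. -/
def RealConnected (n : ℕ) (Ω : Set (Fin n → Oct)) : Prop :=
  IsPreconnected {x : Fin n → ℝ | ofRealn x ∈ Ω}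

/-- Axially symmetric subsets of the cone. -/
def AxSymm (n : ℕ) (Ω : Set (Fin n → Oct)) : Prop :=
  ∀ (x y : Fin n → ℝ), ∀ I ∈ Sph, ∀ J ∈ Sph, aff x y I ∈ Ω → aff x y J ∈ Ω

/-- The upper half-space `ℝ²ⁿ₊`: pairs `(x,y)` with `y = 0` or the first
nonzero coordinate of `y` positive. -/
def pos2n (n : ℕ) : Set ((Fin n → ℝ) × (Fin n → ℝ)) :=
  {p | p.2 = 0 ∨ ∃ m : Fin n, 0 < p.2 m ∧ ∀ k : Fin n, k < m → p.2 k = 0}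

/-- `Ω_{s₁}`. -/
def s1 {n : ℕ} (Ω : Set (Fin n → Oct)) : Set ((Fin n → ℝ) × (Fin n → ℝ)) :=
  {p | ∃ I ∈ Sph, aff p.1 p.2 I ∈ Ω}

/-- `Ω_{s₂}`. -/
def s2 {n : ℕ} (Ω : Set (Fin n → Oct)) : Set ((Fin n → ℝ) × (Fin n → ℝ)) :=
  {p | ∃ J ∈ Sph, ∃ K ∈ Sph, J ≠ K ∧ aff p.1 p.2 J ∈ Ω ∧ aff p.1 p.2 K ∈ Ω}

/-- Slice functions: induced on `Ω_{s₂}⁺` by a pair `(F₁, F₂)` via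
`f(x + yI) = F₁(x,y) + I·F₂(x,y)`. -/
def IsSliceFun (n : ℕ) (Ω : Set (Fin n → Oct)) (f : (Fin n → Oct) → Oct) : Prop :=
  ∃ F₁ F₂ : (Fin n → ℝ) × (Fin n → ℝ) → Oct,
    ∀ x y : Fin n → ℝ, (x, y) ∈ s2 Ω ∩ pos2n n → ∀ I ∈ Sph, aff x y I ∈ Ω →
      f (aff x y I) = F₁ (x, y) + I * F₂ (x, y)

/-- Holomorphy of a function of `n` slice variables, read through the
parametrization `(x,y) ↦ x + yI`: continuous partial derivatives (i.e. `C¹`)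
and the Cauchy–Riemann equations `(∂/∂xₘ + I ∂/∂yₘ) g = 0` on `U`. -/
def Holo (n : ℕ) (I : Oct) (g : (Fin n → ℝ) × (Fin n → ℝ) → Oct)
    (U : Set ((Fin n → ℝ) × (Fin n → ℝ))) : Prop :=
  ContDiffOn ℝ 1 g U ∧
  ∀ p ∈ U, ∀ m : Fin n,
    fderiv ℝ g p (Pi.single m 1, 0) + I * fderiv ℝ g p (0, Pi.single m 1) = 0

/-- Weak slice regularity: each restriction `f|_{Ω ∩ ℂ_Iⁿ}` is holomorphic. -/
def WSliceReg (n : ℕ) (Ω : Set (Fin n → Oct)) (f : (Fin n → Oct) → Oct) : Prop :=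
  ∀ I ∈ Sph, Holo n I (fun p => f (aff p.1 p.2 I)) {p | aff p.1 p.2 I ∈ Ω}

/-- The complex structure `σ(a,b) = (−b,a)` on `𝕆²`. -/
def sigma2 : Oct × Oct → Oct × Oct := fun w => (-w.2, w.1)

/-- Holomorphic stem maps: `F : V → 𝕆²` extends to a `C¹` map `G` on an open
neighborhood `U ⊇ V` satisfying `(∂/∂xₘ + σ ∂/∂yₘ) G = 0` on `U`. -/
def StemHolo (n : ℕ) (V : Set ((Fin n → ℝ) × (Fin n → ℝ)))
    (F : (Fin n → ℝ) × (Fin n → ℝ) → Oct × Oct) : Prop :=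
  ∃ (U : Set ((Fin n → ℝ) × (Fin n → ℝ))) (G : (Fin n → ℝ) × (Fin n → ℝ) → Oct × Oct),
    IsOpen U ∧ V ⊆ U ∧ Set.EqOn G F V ∧ ContDiffOn ℝ 1 G U ∧
    ∀ p ∈ U, ∀ m : Fin n,
      fderiv ℝ G p (Pi.single m 1, 0) + sigma2 (fderiv ℝ G p (0, Pi.single m 1)) = 0

/-- Strong slice regularity: `f` is induced by a holomorphic stem map on `Ω_{s₁}`. -/
def SSliceReg (n : ℕ) (Ω : Set (Fin n → Oct)) (f : (Fin n → Oct) → Oct) : Prop :=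
  ∃ F : (Fin n → ℝ) × (Fin n → ℝ) → Oct × Oct, StemHolo n (s1 Ω) F ∧
    ∀ x y : Fin n → ℝ, ∀ I ∈ Sph, aff x y I ∈ Ω →
      f (aff x y I) = (F (x, y)).1 + I * (F (x, y)).2

/-- An s-basis `{I, J, K}` of the octonions. -/
def IsSBasis (I J K : Oct) : Prop :=
  I ∈ Sph ∧ J ∈ Sph ∧ K ∈ Sph ∧
  LinearIndependent ℝ ![(1 : Oct), I, J, I * J, K, J * K, I * K, (I * J) * K] ∧
  Submodule.span ℝ (Set.range ![(1 : Oct), I, J, I * J, K, J * K, I * K, (I * J) * K]) = ⊤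

/-- Iterated left multiplication `L_w^β = (L_{w₁})^{β₁} ∘ ⋯ ∘ (L_{wₙ})^{βₙ}`. -/
def Lpow {n : ℕ} (w : Fin n → Oct) (β : Fin n → ℕ) : Oct → Oct :=
  fun a => (List.finRange n).foldr (fun ℓ c => (fun o => w ℓ * o)^[β ℓ] c) a

/-- The `*`-power `(q − p)^{*α} a = ∑_{β ≤ α} C(α,β) L_q^β (L_{−p}^{α−β} a)`. -/
def starPow {n : ℕ} (p : Fin n → Oct) (α : Fin n → ℕ) (a : Oct) (q : Fin n → Oct) : Oct :=
  ∑ β ∈ Finset.Iic α, (∏ ℓ, (α ℓ).choose (β ℓ)) • Lpow q β (Lpow (-p) (α - β) a)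

/-- The `ℓ`-th slice derivative `∂_ℓ f (x + w) = (∂/∂x_ℓ) f (x + w)`. -/
def sderiv {n : ℕ} (ℓ : Fin n) (f : (Fin n → Oct) → Oct) : (Fin n → Oct) → Oct :=
  fun q => deriv (fun t : ℝ => f (fun m => q m + (if m = ℓ then t else 0) • (1 : Oct))) 0

/-- The iterated slice derivative `f^{(α)} = (∂₁)^{α₁} ⋯ (∂ₙ)^{αₙ} f`. -/
def sderivMulti {n : ℕ} (α : Fin n → ℕ) (f : (Fin n → Oct) → Oct) : (Fin n → Oct) → Oct :=
  (List.finRange n).foldr (fun ℓ g => (sderiv ℓ)^[α ℓ] g) f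

/-- The slice-polydisc `P̃(q₀, r)` (relative to `I ∈ 𝕊` with `q₀ ∈ ℂ_Iⁿ`):
points `x + yJ` with `x ± yI` in the closed polydisc `P_I(q₀, r)`. -/
def polyDisc {n : ℕ} (q₀ : Fin n → Oct) (I : Oct) (r : Fin n → ℝ) : Set (Fin n → Oct) :=
  {q | ∃ x y : Fin n → ℝ, ∃ J ∈ Sph, q = aff x y J ∧
        (∀ ℓ, ‖aff x y I ℓ - q₀ ℓ‖ ≤ r ℓ) ∧ (∀ ℓ, ‖aff x (-y) I ℓ - q₀ ℓ‖ ≤ r ℓ)}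

namespace Oct


@[simp] lemma c1_mk (a b : ℍ) : c1 (mk a b) = a := rfl
@[simp] lemma c2_mk (a b : ℍ) : c2 (mk a b) = b := rfl
lemma mk_c1_c2 (p : Oct) : mk (c1 p) (c2 p) = p := rfl
@[simp] lemma c1_add (p q : Oct) : c1 (p + q) = c1 p + c1 q := rfl
@[simp] lemma c2_add (p q : Oct) : c2 (p + q) = c2 p + c2 q := rfl
@[simp] lemma c1_neg (p : Oct) : c1 (-p) = -(c1 p) := rfl
@[simp] lemma c2_neg (p : Oct) : c2 (-p) = -(c2 p) := rfl
@[simp] lemma c1_sub (p q : Oct) : c1 (p - q) = c1 p - c1 q := rfl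
@[simp] lemma c2_sub (p q : Oct) : c2 (p - q) = c2 p - c2 q := rfl
@[simp] lemma c1_smul (s : ℝ) (p : Oct) : c1 (s • p) = s • c1 p := rfl
@[simp] lemma c2_smul (s : ℝ) (p : Oct) : c2 (s • p) = s • c2 p := rfl
@[simp] lemma c1_zero : c1 (0 : Oct) = 0 := rfl
@[simp] lemma c2_zero : c2 (0 : Oct) = 0 := rfl
@[simp] lemma c1_one : c1 (1 : Oct) = 1 := rfl
@[simp] lemma c2_one : c2 (1 : Oct) = 0 := rfl
lemma ext_c (p q : Oct) (h1 : c1 p = c1 q) (h2 : c2 p = c2 q) : p = q := by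
  rw [← mk_c1_c2 p, ← mk_c1_c2 q, h1, h2]

@[simp] lemma c1_mul (p q : Oct) : c1 (p * q) = c1 p * c1 q - star (c2 q) * c2 p := rfl
@[simp] lemma c2_mul (p q : Oct) : c2 (p * q) = c2 q * c1 p + c2 p * star (c1 q) := rfl

lemma add_mul' (p p' q : Oct) : (p + p') * q = p * q + p' * q := by
  apply ext_c <;> simp only [c1_mul, c2_mul, c1_add, c2_add] <;> noncomm_ring
lemma mul_add' (p q q' : Oct) : p * (q + q') = p * q + p * q' := by
  apply ext_c <;> simp only [c1_mul, c2_mul, c1_add, c2_add, star_add] <;> noncomm_ring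
lemma smul_mul' (s : ℝ) (p q : Oct) : (s • p) * q = s • (p * q) := by
  apply ext_c <;>
    · simp only [c1_mul, c2_mul, c1_smul, c2_smul]
      simp only [Quaternion.star_smul, smul_sub, smul_add, smul_mul_assoc, mul_smul_comm]
lemma mul_smul'' (s : ℝ) (p q : Oct) : p * (s • q) = s • (p * q) := by
  apply ext_c <;>
    · simp only [c1_mul, c2_mul, c1_smul, c2_smul]
      simp only [Quaternion.star_smul, smul_sub, smul_add, smul_mul_assoc, mul_smul_comm]
lemma neg_mul' (p q : Oct) : (-p) * q = -(p * q) := by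
  apply ext_c <;> simp only [c1_mul, c2_mul, c1_neg, c2_neg] <;> noncomm_ring
lemma mul_neg' (p q : Oct) : p * (-q) = -(p * q) := by
  apply ext_c <;> simp only [c1_mul, c2_mul, c1_neg, c2_neg, star_neg] <;> noncomm_ring
lemma sub_mul' (p p' q : Oct) : (p - p') * q = p * q - p' * q := by
  apply ext_c <;> simp only [c1_mul, c2_mul, c1_sub, c2_sub] <;> noncomm_ring
lemma mul_sub' (p q q' : Oct) : p * (q - q') = p * q - p * q' := by
  apply ext_c <;> simp only [c1_mul, c2_mul, c1_sub, c2_sub, star_sub] <;> noncomm_ring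
@[simp] lemma one_mul' (q : Oct) : (1 : Oct) * q = q := by
  apply ext_c <;> simp
@[simp] lemma mul_one' (q : Oct) : q * (1 : Oct) = q := by
  apply ext_c <;> simp
@[simp] lemma zero_mul' (q : Oct) : (0 : Oct) * q = 0 := by
  apply ext_c <;> simp
@[simp] lemma mul_zero' (q : Oct) : q * (0 : Oct) = 0 := by
  apply ext_c <;> simp
lemma smul_one_mul (s : ℝ) (q : Oct) : (s • (1 : Oct)) * q = s • q := by
  rw [smul_mul', one_mul']

lemma sph_conditions {I : Oct} (hI : I ∈ Sph) :
    star (c1 I) = -(c1 I) ∧ normSq (c1 I) + normSq (c2 I) = 1 := by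
  have h1 : c1 I * c1 I - star (c2 I) * c2 I = -1 := by
    have := congrArg c1 hI; simpa using this
  have h2 : c2 I * c1 I + c2 I * star (c1 I) = 0 := by
    have := congrArg c2 hI; simpa using this
  have hstar : star (c1 I) = -(c1 I) := by
    rcases eq_or_ne (c2 I) 0 with hb | hb
    · have hA : c1 I * c1 I = -1 := by
        rw [hb] at h1; simpa using h1
      have hns : normSq (c1 I) = 1 := by
        have := congrArg normSq hA
        rw [map_mul, normSq_neg, map_one] at this
        nlinarith [(normSq_nonneg (a := c1 I))]
      have hinv : (c1 I)⁻¹ = -(c1 I) := by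
        apply inv_eq_of_mul_eq_one_right
        rw [mul_neg, hA, neg_neg]
      have hstar' : star (c1 I) = (c1 I)⁻¹ := by
        apply eq_inv_of_mul_eq_one_left
        rw [star_mul_self, hns]; simp
      rw [hstar', hinv]
    · have h3 : c2 I * (c1 I + star (c1 I)) = 0 := by rw [mul_add]; exact h2
      have h4 := (mul_eq_zero.1 h3).resolve_left hb
      exact eq_neg_of_add_eq_zero_right h4
  refine ⟨hstar, ?_⟩
  have hAA : c1 I * c1 I = -((normSq (c1 I) : ℝ) : ℍ) := by
    have h5 := self_mul_star (c1 I)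
    rw [hstar, mul_neg] at h5
    exact neg_eq_iff_eq_neg.1 h5
  rw [hAA, star_mul_self] at h1
  have h3 : ((normSq (c1 I) + normSq (c2 I) : ℝ) : ℍ) = ((1:ℝ) : ℍ) := by
    push_cast
    have h6 : -(((normSq (c1 I) : ℝ) : ℍ) + ((normSq (c2 I) : ℝ) : ℍ)) = -(1 : ℍ) := by
      rw [neg_add, ← sub_eq_add_neg]; exact h1
    have := neg_injective h6
    simpa using this
  exact Quaternion.coe_injective h3

lemma sph_mul_mul {I : Oct} (hI : I ∈ Sph) (c : Oct) : I * (I * c) = -c := by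
  obtain ⟨hstar, hns⟩ := sph_conditions hI
  set A := c1 I with hA'
  set B := c2 I with hB'
  have hAA : A * A = -((normSq A : ℝ) : ℍ) := by
    have h5 := self_mul_star A
    rw [hstar, mul_neg] at h5
    exact neg_eq_iff_eq_neg.1 h5
  have hsum : ((normSq A : ℝ) : ℍ) + ((normSq B : ℝ) : ℍ) = 1 := by
    rw [← Quaternion.coe_add]; exact_mod_cast congrArg (fun r : ℝ => (r : ℍ)) hns
  apply ext_c
  · show A * (A * c1 c - star (c2 c) * B) - star (c2 c * A + B * star (c1 c)) * B = c1 (-c)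
    rw [c1_neg]
    have hst : star (c2 c * A + B * star (c1 c)) = -(A * star (c2 c)) + c1 c * star B := by
      rw [star_add, star_mul, star_mul, star_star, hstar]; noncomm_ring
    rw [hst]
    calc A * (A * c1 c - star (c2 c) * B) - (-(A * star (c2 c)) + c1 c * star B) * B
        = A * A * c1 c - c1 c * (star B * B) := by noncomm_ring
      _ = -(c1 c) := by
          rw [hAA, star_mul_self, ← Quaternion.coe_commutes (normSq B) (c1 c)]
          have hkey : -((normSq A : ℝ) : ℍ) * c1 c - ((normSq B : ℝ) : ℍ) * c1 c
              = -(((((normSq A : ℝ) : ℍ) + ((normSq B : ℝ) : ℍ))) * c1 c) := by noncomm_ring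
          rw [hkey, hsum, one_mul]
  · show (c2 c * A + B * star (c1 c)) * A + B * star (A * c1 c - star (c2 c) * B) = c2 (-c)
    rw [c2_neg]
    have hst : star (A * c1 c - star (c2 c) * B) = -(star (c1 c) * A) - star B * star (star (c2 c)) := by
      rw [star_sub, star_mul, star_mul, hstar]; noncomm_ring
    rw [hst, star_star]
    calc (c2 c * A + B * star (c1 c)) * A + B * (-(star (c1 c) * A) - star B * c2 c)
        = c2 c * (A * A) - B * star B * c2 c := by noncomm_ring
      _ = -(c2 c) := by
          rw [hAA, self_mul_star, mul_neg, ← Quaternion.coe_commutes (normSq A) (c2 c)]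
          have hkey : -(((normSq A : ℝ) : ℍ) * c2 c) - ((normSq B : ℝ) : ℍ) * c2 c
              = -(((((normSq A : ℝ) : ℍ) + ((normSq B : ℝ) : ℍ))) * c2 c) := by noncomm_ring
          rw [hkey, hsum, one_mul]

lemma sph_nonreal {I : Oct} (hI : I ∈ Sph) (t : ℝ) : I ≠ t • (1 : Oct) := by
  intro h
  have h2 : I * I = (t*t) • (1 : Oct) := by
    rw [h, smul_mul', mul_smul'', one_mul', smul_smul]
  rw [hI] at h2
  have := congrArg c1 h2
  simp only [c1_neg, c1_one, c1_smul] at this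
  have hre := congrArg QuaternionAlgebra.re this
  simp only [Quaternion.re_neg, Quaternion.re_one, Quaternion.re_smul, smul_eq_mul, mul_one] at hre
  nlinarith

lemma sph_neg {I : Oct} (hI : I ∈ Sph) : -I ∈ Sph := by
  show -I * -I = -1
  rw [neg_mul', mul_neg', neg_neg]; exact hI

/-- coefficient extraction -/
lemma coeff_eq_zero {I : Oct} (hI : I ∈ Sph) {s t : ℝ}
    (h : s • (1 : Oct) + t • I = 0) : s = 0 ∧ t = 0 := by
  rcases eq_or_ne t 0 with ht | ht
  · subst ht
    simp only [zero_smul, add_zero] at h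
    constructor
    · have := congrArg c1 h
      simp only [c1_smul, c1_one, c1_zero] at this
      have hre := congrArg QuaternionAlgebra.re this
      simpa using hre
    · rfl
  · exfalso
    apply sph_nonreal hI (-s/t)
    have : I = (-s/t) • (1 : Oct) := by
      have h2 : t • I = -(s • (1:Oct)) := by
        have := h; rw [add_eq_zero_iff_eq_neg] at this
        calc t • I = (s • (1:Oct) + t • I) - s • (1:Oct) := by abel
          _ = -(s • (1:Oct)) := by rw [h]; abel
      have := congrArg (fun z => (t⁻¹ : ℝ) • z) h2
      simp only [smul_smul, inv_mul_cancel₀ ht, one_smul, smul_neg] at this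
      rw [this, div_eq_mul_inv]
      rw [← smul_smul, ← smul_smul]
      congr 1
      rw [smul_comm]
      simp
    exact this

lemma aff_coeff_eq {I : Oct} (hI : I ∈ Sph) {s t s' t' : ℝ}
    (h : s • (1 : Oct) + t • I = s' • (1 : Oct) + t' • I) : s = s' ∧ t = t' := by
  have h0 : (s - s') • (1 : Oct) + (t - t') • I = 0 := by
    rw [sub_smul, sub_smul]
    rw [show s • (1:Oct) - s' • 1 + (t • I - t' • I) = (s • (1:Oct) + t • I) - (s' • (1:Oct) + t' • I) by abel, h]
    abel
  obtain ⟨h1, h2⟩ := coeff_eq_zero hI h0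
  constructor <;> linarith [sub_eq_zero.mp (by linarith : s - s' = 0)]

end Oct

section AnalyticCore
open Set Metric


section CRcore
variable {n : ℕ}

abbrev Epl (n : ℕ) := (Fin n → ℝ) × (Fin n → ℝ)
abbrev Fpl := Oct × Oct

def Jmap (n : ℕ) : Epl n →L[ℝ] Epl n :=
  (-(ContinuousLinearMap.snd ℝ (Fin n → ℝ) (Fin n → ℝ))).prod
    (ContinuousLinearMap.fst ℝ (Fin n → ℝ) (Fin n → ℝ))

@[simp] lemma Jmap_apply (v : Epl n) : Jmap n v = (-v.2, v.1) := rfl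

def sigF : Fpl →L[ℝ] Fpl :=
  (-(ContinuousLinearMap.snd ℝ Oct Oct)).prod (ContinuousLinearMap.fst ℝ Oct Oct)

@[simp] lemma sigF_apply (w : Fpl) : sigF w = (-w.2, w.1) := rfl

lemma sigF_sigF (w : Fpl) : sigF (sigF w) = -w := by
  simp [Prod.ext_iff]

lemma pi_decomp (x : Fin n → ℝ) : ∑ m, x m • (Pi.single m 1 : Fin n → ℝ) = x := by
  funext j
  rw [Finset.sum_apply]
  simp [Pi.single_apply, Finset.sum_ite_eq']

lemma decomp (v : Epl n) :
    v = (∑ m, v.1 m • ((Pi.single m 1, 0) : Epl n)) +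
        (∑ m, v.2 m • (((0 : Fin n → ℝ), Pi.single m 1) : Epl n)) := by
  apply Prod.ext
  · simp only [Prod.fst_add, Prod.fst_sum, Prod.smul_fst, smul_zero, Finset.sum_const_zero,
      add_zero, pi_decomp]
  · simp only [Prod.snd_add, Prod.snd_sum, Prod.smul_snd, smul_zero, Finset.sum_const_zero,
      zero_add, pi_decomp]

lemma apply_decomp (L : Epl n →L[ℝ] Fpl) (v : Epl n) :
    L v = (∑ m, v.1 m • L (Pi.single m 1, 0)) + (∑ m, v.2 m • L (0, Pi.single m 1)) := by
  conv_lhs => rw [decomp v]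
  rw [map_add, map_sum, map_sum]
  congr 1 <;> exact Finset.sum_congr rfl fun m _ => by rw [map_smul]

/-- From coordinate CR to full complex-linearity of the derivative. -/
lemma cr_linear {L : Epl n →L[ℝ] Fpl}
    (h : ∀ m : Fin n, L (0, Pi.single m 1) = sigF (L (Pi.single m 1, 0))) (v : Epl n) :
    L (Jmap n v) = sigF (L v) := by
  rw [apply_decomp L (Jmap n v), apply_decomp L v, map_add, map_sum, map_sum]
  simp only [Jmap_apply, Pi.neg_apply, map_smul, h, sigF_sigF, smul_neg, neg_smul]
  abel
end CRcore

section Line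
variable {n : ℕ}

/-- the pairing functional `w ↦ λ w.1 + i λ w.2` -/
def pairCLM (lam : Oct →L[ℝ] ℝ) : Fpl →L[ℝ] ℂ :=
  Complex.ofRealCLM.comp (lam.comp (ContinuousLinearMap.fst ℝ Oct Oct)) +
    Complex.I • Complex.ofRealCLM.comp (lam.comp (ContinuousLinearMap.snd ℝ Oct Oct))

lemma pairCLM_apply (lam : Oct →L[ℝ] ℝ) (w : Fpl) :
    pairCLM lam w = (lam w.1 : ℂ) + Complex.I * (lam w.2 : ℂ) := by
  simp [pairCLM, smul_eq_mul]

lemma pairCLM_sigF (lam : Oct →L[ℝ] ℝ) (w : Fpl) :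
    pairCLM lam (sigF w) = Complex.I * pairCLM lam w := by
  simp only [pairCLM_apply, sigF_apply, map_neg]
  push_cast
  linear_combination (-(lam w.2 : ℂ)) * Complex.I_sq

lemma pair_eq_zero {w : Fpl} (h : ∀ lam : Oct →L[ℝ] ℝ, pairCLM lam w = 0) : w = 0 := by
  have h1 : ∀ lam : Oct →L[ℝ] ℝ, lam w.1 = 0 ∧ lam w.2 = 0 := by
    intro lam
    have := h lam
    rw [pairCLM_apply] at this
    have hre := congrArg Complex.re this
    have him := congrArg Complex.im this
    simp at hre him
    exact ⟨hre, him⟩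
  have key : ∀ u : Oct, (∀ lam : Oct →L[ℝ] ℝ, lam u = 0) → u = 0 := by
    intro u hu
    by_contra hu0
    obtain ⟨g, _, hg⟩ := exists_dual_vector ℝ u (norm_ne_zero_iff.2 hu0)
    have := hu g
    rw [this] at hg
    exact hu0 (by simpa using (norm_eq_zero.1 (by exact_mod_cast hg.symm)))
  have w1 : w.1 = 0 := key _ fun lam => (h1 lam).1
  have w2 : w.2 = 0 := key _ fun lam => (h1 lam).2
  exact Prod.ext w1 w2

/-- restriction of a CR function to a complex line is holomorphic; vanishing on a real
interval near `0` implies vanishing on the disc. -/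
lemma line_lemma {U : Set (Epl n)} (hU : IsOpen U) {h : Epl n → Fpl}
    (hC : ContDiffOn ℝ 1 h U)
    (hCR : ∀ p ∈ U, ∀ v, fderiv ℝ h p (Jmap n v) = sigF (fderiv ℝ h p v))
    (z₀ d : Epl n) (r δ : ℝ) (hr : 0 < r) (hδ : 0 < δ)
    (hmap : ∀ ζ : ℂ, ζ ∈ ball (0 : ℂ) r →
      z₀ + ζ.re • d + ζ.im • (Jmap n d) ∈ U)
    (hz : ∀ t : ℝ, |t| < δ → h (z₀ + t • d) = 0) :
    ∀ ζ : ℂ, ζ ∈ ball (0 : ℂ) r → h (z₀ + ζ.re • d + ζ.im • (Jmap n d)) = 0 := by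
  set A : ℂ →L[ℝ] Epl n :=
    (Complex.reCLM.smulRight d) + (Complex.imCLM.smulRight (Jmap n d)) with hA
  have hAapp : ∀ ζ : ℂ, A ζ = ζ.re • d + ζ.im • (Jmap n d) := fun ζ => rfl
  set φ : ℂ → Epl n := fun ζ => z₀ + A ζ with hφ
  have hφval : ∀ ζ : ℂ, φ ζ = z₀ + ζ.re • d + ζ.im • (Jmap n d) := by
    intro ζ; rw [hφ]; simp [hAapp, add_assoc]
  -- each pairing is ℂ-differentiable on the ball
  have main : ∀ lam : Oct →L[ℝ] ℝ, ∀ ζ ∈ ball (0:ℂ) r, pairCLM lam (h (φ ζ)) = 0 := by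
    intro lam
    set ψ : ℂ → ℂ := fun ζ => pairCLM lam (h (φ ζ)) with hψ
    have hdiff : DifferentiableOn ℂ ψ (ball (0:ℂ) r) := by
      intro ζ₀ hζ₀
      have hζ₀' : ζ₀ ∈ ball (0:ℂ) r := hζ₀
      have hpU : φ ζ₀ ∈ U := by rw [hφval]; exact hmap _ hζ₀'
      have hhd : DifferentiableAt ℝ h (φ ζ₀) :=
        (hC.contDiffAt (hU.mem_nhds hpU)).differentiableAt one_ne_zero
      have hφd : HasFDerivAt φ A ζ₀ := by
        simpa [hφ] using (A.hasFDerivAt (x := ζ₀)).const_add z₀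
      have hcomp : HasFDerivAt ψ
          ((pairCLM lam).comp ((fderiv ℝ h (φ ζ₀)).comp A)) ζ₀ := by
        have := (hhd.hasFDerivAt.comp ζ₀ hφd)
        exact ((pairCLM lam).hasFDerivAt.comp ζ₀ this)
      set L : ℂ →L[ℝ] ℂ := (pairCLM lam).comp ((fderiv ℝ h (φ ζ₀)).comp A) with hL
      set c : ℂ := L 1 with hc
      have hLI : L Complex.I = Complex.I * c := by
        have hA1 : A 1 = d := by rw [hAapp]; simp
        have hAI : A Complex.I = Jmap n d := by rw [hAapp]; simp
        rw [hL]
        simp only [ContinuousLinearMap.comp_apply, hA1, hAI]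
        rw [hCR _ hpU, pairCLM_sigF]
        rw [hc, hL]
        simp [ContinuousLinearMap.comp_apply, hA1]
      -- the ℂ-linear derivative
      have hrs : (c • (1 : ℂ →L[ℂ] ℂ)).restrictScalars ℝ = L := by
        apply ContinuousLinearMap.ext
        intro z
        have hz' : z = z.re • (1:ℂ) + z.im • Complex.I := by
          rw [Complex.real_smul, Complex.real_smul, mul_one]
          exact (Complex.re_add_im z).symm
        have lhs_eq : (ContinuousLinearMap.restrictScalars ℝ (c • (1 : ℂ →L[ℂ] ℂ))) z
            = c * z := rfl
        rw [lhs_eq]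
        conv_rhs => rw [hz']
        rw [map_add, map_smul, map_smul, hLI, ← hc]
        have hzz : z = (z.re : ℂ) + (z.im : ℂ) * Complex.I := (Complex.re_add_im z).symm
        conv_lhs => rw [hzz]
        simp only [Complex.real_smul, smul_eq_mul]
        ring
      have hfd : HasFDerivAt ψ ((c • (1 : ℂ →L[ℂ] ℂ)).restrictScalars ℝ) ζ₀ := hrs ▸ hcomp
      have hfdc : HasFDerivAt (𝕜 := ℂ) ψ (c • (1 : ℂ →L[ℂ] ℂ)) ζ₀ := by
        rw [hasFDerivAt_iff_isLittleO_nhds_zero] at hfd ⊢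
        exact hfd
      exact hfdc.differentiableAt.differentiableWithinAt
    have han : AnalyticOnNhd ℂ ψ (ball (0:ℂ) r) := hdiff.analyticOnNhd isOpen_ball
    have hfreq : ∃ᶠ z in 𝓝[≠] (0:ℂ), ψ z = 0 := by
      rw [Filter.frequently_iff]
      intro S hS
      rw [mem_nhdsWithin] at hS
      obtain ⟨V, hVopen, hV0, hVsub⟩ := hS
      obtain ⟨ε, hε, hball⟩ := Metric.isOpen_iff.1 hVopen 0 hV0
      set t : ℝ := min (δ/2) (ε/2) with ht
      have htpos : 0 < t := by positivity
      refine ⟨(t : ℂ), hVsub ⟨hball ?_, ?_⟩, ?_⟩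
      · simp [Complex.norm_real, abs_of_pos htpos]
        calc t ≤ ε/2 := min_le_right _ _
          _ < ε := by linarith
      · simp only [Set.mem_compl_iff, Set.mem_singleton_iff]
        exact_mod_cast ne_of_gt htpos
      · show ψ (t : ℂ) = 0
        have hzt := hz t (by rw [abs_of_pos htpos]; calc t ≤ δ/2 := min_le_left _ _
                                                      _ < δ := by linarith)
        have hφt : φ (t : ℂ) = z₀ + t • d := by
          rw [hφval]; simp
        show pairCLM lam (h (φ (t:ℂ))) = 0
        rw [hφt, hzt, map_zero]
    have := han.eqOn_zero_of_preconnected_of_frequently_eq_zero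
      (convex_ball (0:ℂ) r).isPreconnected (mem_ball_self hr) hfreq
    intro ζ hζ
    exact this hζ
  intro ζ hζ
  have : ∀ lam : Oct →L[ℝ] ℝ, pairCLM lam (h (φ ζ)) = 0 := fun lam => main lam ζ hζ
  have := pair_eq_zero this
  rw [hφval] at this
  exact this
end Line

section Vanish
variable {n : ℕ}

lemma norm_Jmap (v : Epl n) : ‖Jmap n v‖ = ‖v‖ := by
  show ‖((-v.2, v.1) : Epl n)‖ = ‖v‖
  rw [Prod.norm_def, Prod.norm_def, norm_neg, max_comm]

lemma norm_single_le (m : Fin n) : ‖(Pi.single m 1 : Fin n → ℝ)‖ ≤ 1 := by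
  rw [pi_norm_le_iff_of_nonneg (by norm_num)]
  intro i
  rcases eq_or_ne m i with rfl | hne
  · simp
  · rw [Pi.single_eq_of_ne (Ne.symm hne)]
    simp

lemma local_vanish {U : Set (Epl n)} (hU : IsOpen U) {h : Epl n → Fpl}
    (hC : ContDiffOn ℝ 1 h U)
    (hCR : ∀ p ∈ U, ∀ v, fderiv ℝ h p (Jmap n v) = sigF (fderiv ℝ h p v))
    {p : Epl n} (hp : p.2 = 0) {ε : ℝ} (hε : 0 < ε) (hball : ball p ε ⊆ U)
    (hzero : ∀ w ∈ ball p ε, w.2 = 0 → h w = 0) :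
    ∀ w ∈ ball p (ε / 4 ^ n), h w = 0 := by
  have main : ∀ k : ℕ, ∀ w ∈ ball p (ε / 4 ^ k),
      (∀ m : Fin n, k ≤ (m : ℕ) → w.2 m = 0) → h w = 0 := by
    intro k
    induction k with
    | zero =>
      intro w hw hcond
      refine hzero w (by simpa using hw) ?_
      funext m; exact hcond m (Nat.zero_le _)
    | succ k ih =>
      intro w hw hcond
      by_cases hkn : k < n
      · set m₀ : Fin n := ⟨k, hkn⟩ with hm₀
        set z : Epl n := (w.1, Function.update w.2 m₀ 0) with hzdef
        set d : Epl n := (Pi.single m₀ 1, 0) with hddef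
        have hJd : Jmap n d = ((0 : Fin n → ℝ), Pi.single m₀ 1) := by
          rw [hddef]; simp [Prod.ext_iff]
        have hdn : ‖d‖ ≤ 1 := by
          rw [hddef, Prod.norm_def]
          simp only [norm_zero]
          rw [max_le_iff]
          exact ⟨norm_single_le m₀, by norm_num⟩
        have hJdn : ‖Jmap n d‖ ≤ 1 := by rw [norm_Jmap]; exact hdn
        have hup_le : ‖Function.update w.2 m₀ 0‖ ≤ ‖w.2‖ := by
          rw [pi_norm_le_iff_of_nonneg (norm_nonneg _)]
          intro i
          rcases eq_or_ne i m₀ with rfl | hne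
          · simp
          · rw [Function.update_of_ne hne]
            exact norm_le_pi_norm _ i
        have hwp : ‖w - p‖ < ε / 4 ^ (k+1) := by
          rw [← dist_eq_norm]; exact mem_ball.1 hw
        have hzp : ‖z - p‖ ≤ ‖w - p‖ := by
          rw [Prod.norm_def, Prod.norm_def]
          apply max_le_max
          · exact le_rfl
          · show ‖Function.update w.2 m₀ 0 - p.2‖ ≤ ‖w.2 - p.2‖
            rw [hp, sub_zero, sub_zero]
            exact hup_le
        have hzball : ‖z - p‖ < ε / 4 ^ (k+1) := lt_of_le_of_lt hzp hwp
        set r : ℝ := ε / 4 ^ (k+1) with hrdef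
        have hrpos : 0 < r := by positivity
        have key := line_lemma hU hC hCR z d r r hrpos hrpos ?_ ?_
        · -- use at ζ* = (w.2 m₀) * I
          set ζs : ℂ := (w.2 m₀ : ℝ) * Complex.I with hζs
          have hζsmem : ζs ∈ ball (0:ℂ) r := by
            rw [mem_ball, dist_zero_right, hζs]
            rw [norm_mul]
            simp only [Complex.norm_real, Complex.norm_I, mul_one]
            calc |w.2 m₀| ≤ ‖w.2 - p.2‖ := by
                  rw [hp, sub_zero, ← Real.norm_eq_abs]
                  exact norm_le_pi_norm w.2 m₀
              _ ≤ ‖w - p‖ := norm_snd_le (w - p)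
              _ < r := hwp
          have := key ζs hζsmem
          have hre : ζs.re = 0 := by rw [hζs]; simp
          have him : ζs.im = w.2 m₀ := by rw [hζs]; simp
          rw [hre, him] at this
          have hpt : z + (0:ℝ) • d + (w.2 m₀) • (Jmap n d) = w := by
            rw [zero_smul, add_zero, hJd, hzdef]
            apply Prod.ext
            · simp
            · show Function.update w.2 m₀ 0 + (w.2 m₀) • (Pi.single m₀ 1 : Fin n → ℝ) = w.2
              funext j
              rcases eq_or_ne j m₀ with rfl | hne
              · simp
              · simp [Function.update_of_ne hne, Pi.single_eq_of_ne hne]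
          rw [hpt] at this
          exact this
        · -- hmap
          intro ζ hζ
          apply hball
          rw [mem_ball]
          have hζn : ‖ζ‖ < r := by
            rw [mem_ball, dist_zero_right] at hζ; exact hζ
          have : ‖z + ζ.re • d + ζ.im • (Jmap n d) - p‖ ≤
              ‖z - p‖ + |ζ.re| * ‖d‖ + |ζ.im| * ‖Jmap n d‖ := by
            calc ‖z + ζ.re • d + ζ.im • (Jmap n d) - p‖
                = ‖(z - p) + ζ.re • d + ζ.im • (Jmap n d)‖ := by ring_nf
              _ ≤ ‖(z - p) + ζ.re • d‖ + ‖ζ.im • (Jmap n d)‖ := norm_add_le _ _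
              _ ≤ ‖z - p‖ + ‖ζ.re • d‖ + ‖ζ.im • (Jmap n d)‖ := by
                  have := norm_add_le (z - p) (ζ.re • d); linarith
              _ = ‖z - p‖ + |ζ.re| * ‖d‖ + |ζ.im| * ‖Jmap n d‖ := by
                  rw [norm_smul, norm_smul]; simp [Real.norm_eq_abs]
          rw [dist_eq_norm]
          have h1 : |ζ.re| * ‖d‖ ≤ ‖ζ‖ := by
            calc |ζ.re| * ‖d‖ ≤ |ζ.re| * 1 := by
                  apply mul_le_mul_of_nonneg_left hdn (abs_nonneg _)
              _ = |ζ.re| := mul_one _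
              _ ≤ ‖ζ‖ := Complex.abs_re_le_norm ζ
          have h2 : |ζ.im| * ‖Jmap n d‖ ≤ ‖ζ‖ := by
            calc |ζ.im| * ‖Jmap n d‖ ≤ |ζ.im| * 1 := by
                  apply mul_le_mul_of_nonneg_left hJdn (abs_nonneg _)
              _ = |ζ.im| := mul_one _
              _ ≤ ‖ζ‖ := Complex.abs_im_le_norm ζ
          have h4 : (4:ℝ) ≤ 4 ^ (k+1) := by
            calc (4:ℝ) = 4^1 := (pow_one 4).symm
              _ ≤ 4^(k+1) := pow_le_pow_right₀ (by norm_num) (by omega)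
          calc ‖z + ζ.re • d + ζ.im • (Jmap n d) - p‖
              ≤ ‖z - p‖ + |ζ.re| * ‖d‖ + |ζ.im| * ‖Jmap n d‖ := this
            _ < r + r + r := by
                have := lt_of_le_of_lt h1 hζn
                have := lt_of_le_of_lt h2 hζn
                linarith [hzball]
            _ = 3 * (ε / 4^(k+1)) := by rw [hrdef]; ring
            _ ≤ 3 * (ε / 4) := by
                apply mul_le_mul_of_nonneg_left _ (by norm_num)
                exact div_le_div_of_nonneg_left (le_of_lt hε) (by norm_num) h4
            _ < ε := by linarith
        · -- hz : real zeros, via induction hypothesis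
          intro t ht
          apply ih
          · rw [mem_ball, dist_eq_norm]
            have : ‖z + t • d - p‖ ≤ ‖z - p‖ + |t| * ‖d‖ := by
              calc ‖z + t • d - p‖ = ‖(z - p) + t • d‖ := by ring_nf
                _ ≤ ‖z - p‖ + ‖t • d‖ := norm_add_le _ _
                _ = ‖z - p‖ + |t| * ‖d‖ := by rw [norm_smul]; simp [Real.norm_eq_abs]
            have h1 : |t| * ‖d‖ ≤ |t| := by
              calc |t| * ‖d‖ ≤ |t| * 1 := mul_le_mul_of_nonneg_left hdn (abs_nonneg _)
                _ = |t| := mul_one _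
            have h2 : ε / 4^(k+1) + ε / 4^(k+1) ≤ ε / 4^k := by
              rw [← add_div, pow_succ]
              rw [div_le_div_iff₀ (by positivity) (by positivity)]
              have : (0:ℝ) < 4^k := by positivity
              nlinarith
            calc ‖z + t • d - p‖ ≤ ‖z - p‖ + |t| * ‖d‖ := this
              _ < ε / 4^(k+1) + ε / 4^(k+1) := by
                  have := lt_of_le_of_lt h1 ht
                  linarith [hzball]
              _ ≤ ε / 4^k := h2
          · intro m hm
            show (z + t • d).2 m = 0
            have : (z + t • d).2 = Function.update w.2 m₀ 0 := by
              rw [hzdef, hddef]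
              show Function.update w.2 m₀ 0 + t • (0 : Fin n → ℝ) = _
              rw [smul_zero, add_zero]
            rw [this]
            rcases eq_or_ne m m₀ with rfl | hne
            · simp
            · rw [Function.update_of_ne hne]
              apply hcond
              have : (m : ℕ) ≠ k := by
                intro hh; exact hne (Fin.ext hh)
              omega
      · -- k ≥ n : vacuous coordinates
        apply ih
        · apply ball_subset_ball _ hw
          apply div_le_div_of_nonneg_left (le_of_lt hε) (by positivity)
          apply pow_le_pow_right₀ (by norm_num) (by omega)
        · intro m hm
          exact absurd m.2 (by omega)
  intro w hw
  exact main n w hw (fun m hm => absurd m.2 (by omega))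

lemma global_vanish {U : Set (Epl n)} (hU : IsOpen U) {h : Epl n → Fpl}
    (hC : ContDiffOn ℝ 1 h U)
    (hCR : ∀ p ∈ U, ∀ v, fderiv ℝ h p (Jmap n v) = sigF (fderiv ℝ h p v))
    {C : Set (Epl n)} (hCopen : IsOpen C) (hCconn : IsPreconnected C) (hCU : C ⊆ U)
    {q : Epl n} (hq : q ∈ C) {ρ₀ : ℝ} (hρ₀ : 0 < ρ₀)
    (hzero : ∀ w ∈ ball q ρ₀, h w = 0) :
    ∀ p ∈ C, h p = 0 := by
  set Z : Set (Epl n) := {z | ∃ ρ > 0, ∀ w ∈ ball z ρ, h w = 0} with hZdef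
  have hZopen : IsOpen Z := by
    rw [Metric.isOpen_iff]
    rintro z ⟨ρ, hρ, hz⟩
    refine ⟨ρ/2, by positivity, ?_⟩
    intro z' hz'
    refine ⟨ρ/2, by positivity, ?_⟩
    intro w hw
    apply hz
    rw [mem_ball] at *
    calc dist w z ≤ dist w z' + dist z' z := dist_triangle _ _ _
      _ < ρ/2 + ρ/2 := by linarith
      _ = ρ := by ring
  have key : C ∩ closure Z ⊆ Z := by
    rintro z ⟨hzC, hzcl⟩
    obtain ⟨ρ, hρ, hρball⟩ := Metric.isOpen_iff.1 hCopen z hzC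
    obtain ⟨z₀, hz₀Z, hz₀d⟩ := Metric.mem_closure_iff.1 hzcl (ρ/8) (by positivity)
    obtain ⟨ρ₁, hρ₁, hz₀ball⟩ := hz₀Z
    refine ⟨ρ/8, by positivity, ?_⟩
    intro w hw
    set d : Epl n := w - z₀ with hddef
    have hdn : ‖d‖ < ρ/4 := by
      rw [hddef]
      calc ‖w - z₀‖ ≤ ‖w - z‖ + ‖z - z₀‖ := norm_sub_le_norm_sub_add_norm_sub _ _ _
        _ < ρ/8 + ρ/8 := by
            apply add_lt_add
            · rw [← dist_eq_norm]; exact mem_ball.1 hw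
            · rw [← dist_eq_norm]; exact hz₀d
        _ = ρ/4 := by ring
    set δ : ℝ := min (ρ₁/(‖d‖+1)) 1 with hδdef
    have hδpos : 0 < δ := by
      apply lt_min _ one_pos
      positivity
    have key2 := line_lemma hU hC hCR z₀ d (3/2) δ (by norm_num) hδpos ?_ ?_
    · have h1mem : (1:ℂ) ∈ ball (0:ℂ) (3/2) := by
        rw [mem_ball, dist_zero_right]; norm_num
      have := key2 1 h1mem
      simp only [Complex.one_re, Complex.one_im, one_smul, zero_smul, add_zero] at this
      rw [hddef] at this
      simpa using this
    · intro ζ hζ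
      have hζn : ‖ζ‖ < 3/2 := by
        rw [mem_ball, dist_zero_right] at hζ; exact hζ
      apply hCU
      apply hρball
      rw [mem_ball, dist_eq_norm]
      have hJdn : ‖Jmap n d‖ = ‖d‖ := norm_Jmap d
      calc ‖z₀ + ζ.re • d + ζ.im • Jmap n d - z‖
          = ‖(z₀ - z) + ζ.re • d + ζ.im • Jmap n d‖ := by ring_nf
        _ ≤ ‖(z₀ - z) + ζ.re • d‖ + ‖ζ.im • Jmap n d‖ := norm_add_le _ _
        _ ≤ ‖z₀ - z‖ + ‖ζ.re • d‖ + ‖ζ.im • Jmap n d‖ := by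
            have := norm_add_le (z₀ - z) (ζ.re • d); linarith
        _ = ‖z₀ - z‖ + |ζ.re| * ‖d‖ + |ζ.im| * ‖d‖ := by
            rw [norm_smul, norm_smul, hJdn]; simp [Real.norm_eq_abs]
        _ < ρ/8 + (3/2) * (ρ/4) + (3/2) * (ρ/4) := by
            have hre := lt_of_le_of_lt (Complex.abs_re_le_norm ζ) (by exact hζn)
            have him := lt_of_le_of_lt (Complex.abs_im_le_norm ζ) (by exact hζn)
            have h0 : ‖z₀ - z‖ < ρ/8 := by
              rw [← dist_eq_norm, dist_comm]
              exact hz₀d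
            have hd0 : 0 ≤ ‖d‖ := norm_nonneg _
            have hb1 : |ζ.re| * ‖d‖ ≤ (3/2) * (ρ/4) := by
              apply mul_le_mul (le_of_lt hre) (le_of_lt hdn) hd0 (by norm_num)
            have hb2 : |ζ.im| * ‖d‖ ≤ (3/2) * (ρ/4) := by
              apply mul_le_mul (le_of_lt him) (le_of_lt hdn) hd0 (by norm_num)
            nlinarith [abs_nonneg ζ.re, abs_nonneg ζ.im]
        _ < ρ := by linarith
    · intro t ht
      apply hz₀ball
      rw [mem_ball, dist_eq_norm]
      have : ‖z₀ + t • d - z₀‖ = |t| * ‖d‖ := by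
        rw [add_sub_cancel_left, norm_smul, Real.norm_eq_abs]
      rw [this]
      have h1 : |t| < ρ₁/(‖d‖+1) := lt_of_lt_of_le ht (min_le_left _ _)
      have h2 : (0:ℝ) < ‖d‖ + 1 := by positivity
      rcases eq_or_lt_of_le (norm_nonneg d) with hd0 | hd0
      · rw [← hd0, mul_zero]; exact hρ₁
      · calc |t| * ‖d‖ < (ρ₁/(‖d‖+1)) * ‖d‖ := mul_lt_mul_of_pos_right h1 hd0
          _ = ρ₁ * (‖d‖/(‖d‖+1)) := by ring
          _ ≤ ρ₁ * 1 := by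
              apply mul_le_mul_of_nonneg_left _ (le_of_lt hρ₁)
              rw [div_le_one h2]; linarith
          _ = ρ₁ := mul_one _
  -- clopen argument
  have hqZ : q ∈ Z := ⟨ρ₀, hρ₀, hzero⟩
  have hsub : C ⊆ Z ∪ (closure Z)ᶜ := by
    intro z hz
    by_cases hcl : z ∈ closure Z
    · exact Or.inl (key ⟨hz, hcl⟩)
    · exact Or.inr hcl
  have hdisj : Disjoint Z (closure Z)ᶜ := by
    rw [Set.disjoint_iff]
    rintro z ⟨hz1, hz2⟩
    exact hz2 (subset_closure hz1)
  have := hCconn.subset_left_of_subset_union hZopen (isClosed_closure.isOpen_compl)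
    hdisj hsub ⟨q, hq, hqZ⟩
  intro p hp
  obtain ⟨ρ, hρ, hball⟩ := this hp
  exact hball p (mem_ball_self hρ)
end Vanish

end AnalyticCore

section SliceTop
open Set Metric Oct

variable {n : ℕ}

/-- standard imaginary units -/
def uI : Oct := Oct.mk ⟨0,1,0,0⟩ 0
def uJ : Oct := Oct.mk ⟨0,0,1,0⟩ 0

lemma neg_one_oct : (-1 : Oct) = Oct.mk (-1) 0 := by
  apply Oct.ext_c <;> simp

lemma quat_i_sq : (⟨0,1,0,0⟩ : ℍ) * ⟨0,1,0,0⟩ = -1 := by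
  ext <;> simp [Quaternion.re_mul, Quaternion.imI_mul, Quaternion.imJ_mul, Quaternion.imK_mul]

lemma quat_j_sq : (⟨0,0,1,0⟩ : ℍ) * ⟨0,0,1,0⟩ = -1 := by
  ext <;> simp [Quaternion.re_mul, Quaternion.imI_mul, Quaternion.imJ_mul, Quaternion.imK_mul]

lemma uI_mem : uI ∈ Sph := by
  show uI * uI = -1
  rw [neg_one_oct]
  apply Oct.ext_c
  · show Oct.c1 uI * Oct.c1 uI - star (Oct.c2 uI) * Oct.c2 uI = Oct.c1 (Oct.mk (-1) 0)
    rw [show Oct.c2 uI = 0 from rfl, star_zero, zero_mul, sub_zero]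
    exact quat_i_sq
  · show Oct.c2 uI * Oct.c1 uI + Oct.c2 uI * star (Oct.c1 uI) = Oct.c2 (Oct.mk (-1) 0)
    rw [show Oct.c2 uI = 0 from rfl, zero_mul, zero_mul, add_zero]
    rfl

lemma uJ_mem : uJ ∈ Sph := by
  show uJ * uJ = -1
  rw [neg_one_oct]
  apply Oct.ext_c
  · show Oct.c1 uJ * Oct.c1 uJ - star (Oct.c2 uJ) * Oct.c2 uJ = Oct.c1 (Oct.mk (-1) 0)
    rw [show Oct.c2 uJ = 0 from rfl, star_zero, zero_mul, sub_zero]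
    exact quat_j_sq
  · show Oct.c2 uJ * Oct.c1 uJ + Oct.c2 uJ * star (Oct.c1 uJ) = Oct.c2 (Oct.mk (-1) 0)
    rw [show Oct.c2 uJ = 0 from rfl, zero_mul, zero_mul, add_zero]
    rfl

lemma uI_ne_uJ : uI ≠ uJ := by
  intro h
  have := congrArg Oct.c1 h
  simp only [uI, uJ, Oct.c1_mk] at this
  have := congrArg QuaternionAlgebra.imI this
  change (1:ℝ) = 0 at this
  simp at this

lemma uI_ne_neg_uJ : uI ≠ -uJ := by
  intro h
  have := congrArg Oct.c1 h
  simp only [uI, uJ, Oct.c1_mk, Oct.c1_neg] at this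
  have := congrArg QuaternionAlgebra.imI this
  change (1:ℝ) = -0 at this
  simp at this

lemma exists_third {J : Oct} (hJ : J ∈ Sph) : ∃ K ∈ Sph, K ≠ J ∧ K ≠ -J := by
  by_cases h1 : uI = J ∨ uI = -J
  · refine ⟨uJ, uJ_mem, ?_, ?_⟩
    · intro h2
      rcases h1 with h1 | h1
      · exact uI_ne_uJ (h1.trans h2.symm)
      · exact uI_ne_neg_uJ (h1.trans (by rw [h2]))
    · intro h2
      rcases h1 with h1 | h1
      · exact uI_ne_neg_uJ (by rw [h2, neg_neg]; exact h1)
      · exact uI_ne_uJ (by rw [h1, h2])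
  · push_neg at h1
    exact ⟨uI, uI_mem, fun h => h1.1 h, fun h => h1.2 h⟩

lemma aff_apply (x y : Fin n → ℝ) (I : Oct) (m : Fin n) :
    aff x y I m = x m • (1 : Oct) + y m • I := rfl

lemma aff_indep (x : Fin n → ℝ) (I I' : Oct) : aff x 0 I = aff x 0 I' := by
  funext m; simp [aff_apply]

set_option maxHeartbeats 1000000 in
/-- equality analysis for points of the cone -/
lemma aff_cases {x y x' y' : Fin n → ℝ} {I I' : Oct} (hI : I ∈ Sph) (hI' : I' ∈ Sph)
    (h : aff x y I = aff x' y' I') :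
    x = x' ∧ ((y = 0 ∧ y' = 0) ∨ (y = y' ∧ I = I') ∨ (y = -y' ∧ I = -I')) := by
  have hm : ∀ m, x m • (1:Oct) + y m • I = x' m • (1:Oct) + y' m • I' :=
    fun m => congrFun h m
  by_cases hy : y = 0
  · subst hy
    have hxy : ∀ m, x m = x' m ∧ (0:ℝ) = y' m := by
      intro m
      apply aff_coeff_eq hI'
      have := hm m
      simpa using this
    constructor
    · funext m; exact (hxy m).1
    · exact Or.inl ⟨rfl, by funext m; exact ((hxy m).2).symm⟩
  · obtain ⟨m₀, hym₀⟩ : ∃ m, y m ≠ 0 := by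
      by_contra hc; push_neg at hc; exact hy (funext hc)
    set a : ℝ := (x' m₀ - x m₀) / y m₀ with ha
    set b : ℝ := y' m₀ / y m₀ with hb
    have hIexp : I = a • (1:Oct) + b • I' := by
      have h0 := hm m₀
      have h1 : y m₀ • I = (x' m₀ - x m₀) • (1:Oct) + y' m₀ • I' := by
        rw [sub_smul]
        calc y m₀ • I = (x m₀ • (1:Oct) + y m₀ • I) - x m₀ • (1:Oct) := by abel
          _ = (x' m₀ • (1:Oct) + y' m₀ • I') - x m₀ • (1:Oct) := by rw [h0]
          _ = x' m₀ • (1:Oct) - x m₀ • (1:Oct) + y' m₀ • I' := by abel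
    
      have := congrArg (fun z => (y m₀)⁻¹ • z) h1
      simp only [smul_add, smul_smul, inv_mul_cancel₀ hym₀, one_smul] at this
      rw [this, ha, hb]
      congr 2 <;> · rw [div_eq_mul_inv, mul_comm]
    have hII : I * I = -1 := hI
    have hI'I' : I' * I' = -1 := hI'
    have key : (a*a - b*b) • (1:Oct) + (2*a*b) • I' = I * I := by
      rw [hIexp]
      simp only [Oct.add_mul', Oct.mul_add', Oct.smul_mul', Oct.mul_smul'',
        Oct.one_mul', Oct.mul_one', hI'I', smul_smul]
      module
    have hsq : (a*a - b*b) • (1:Oct) + (2*a*b) • I' = (-1 : ℝ) • (1:Oct) + (0:ℝ) • I' := by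
      rw [key, hII, zero_smul, add_zero, neg_smul, one_smul]
    obtain ⟨hab1, hab2⟩ := aff_coeff_eq hI' hsq
    have hbne : b ≠ 0 := by
      intro hb0
      rw [hb0] at hab1
      nlinarith
    have ha0 : a = 0 := by
      rcases mul_eq_zero.1 (by linarith : a * b = 0) with h | h
      · exact h
      · exact absurd h hbne
    have hb2 : b = 1 ∨ b = -1 := by
      have : b * b = 1 := by rw [ha0] at hab1; nlinarith
      rcases mul_self_eq_one_iff.1 this with h | h
      · exact Or.inl h
      · exact Or.inr h
    rw [ha0, zero_smul, zero_add] at hIexp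
    have hcoeff : ∀ m, x m = x' m ∧ y m * b = y' m := by
      intro m
      apply aff_coeff_eq hI'
      have := hm m
      rw [hIexp, smul_smul] at this
      exact this
    have hx : x = x' := funext fun m => (hcoeff m).1
    rcases hb2 with hb1 | hbm1
    · refine ⟨hx, Or.inr (Or.inl ⟨?_, ?_⟩)⟩
      · funext m
        have := (hcoeff m).2
        rw [hb1, mul_one] at this
        exact this
      · rw [hIexp, hb1, one_smul]
    · refine ⟨hx, Or.inr (Or.inr ⟨?_, ?_⟩)⟩
      · funext m
        have := (hcoeff m).2
        rw [hbm1] at this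
        simp only [Pi.neg_apply]
        linarith
      · rw [hIexp, hbm1, neg_smul, one_smul]

lemma tsopen_iff {S : Set (Fin n → Oct)} :
    IsOpen[τs n] S ↔ ∀ I : Sph,
      IsOpen ((fun p : (Fin n → ℝ) × (Fin n → ℝ) => aff p.1 p.2 I.1) ⁻¹' S) := by
  show @IsOpen _ (⨆ I : Sph, TopologicalSpace.coinduced _ inferInstance) S ↔ _
  rw [isOpen_iSup_iff]
  constructor
  · intro h I
    have := h I
    rwa [isOpen_coinduced] at this
  · intro h I
    rw [isOpen_coinduced]
    exact h I

end SliceTop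

section Usets
open Set Metric Oct

variable {n : ℕ} {Ω : Set (Fin n → Oct)}

def Uset (Ω : Set (Fin n → Oct)) : Set ((Fin n → ℝ) × (Fin n → ℝ)) :=
  {p | aff p.1 p.2 uI ∈ Ω}

lemma mem_U_iff (hax : AxSymm n Ω) {p : (Fin n → ℝ) × (Fin n → ℝ)} {I : Oct} (hI : I ∈ Sph) :
    p ∈ Uset Ω ↔ aff p.1 p.2 I ∈ Ω :=
  ⟨fun h => hax p.1 p.2 uI uI_mem I hI h, fun h => hax p.1 p.2 I hI uI uI_mem h⟩

lemma U_open (hΩop : IsOpen[τs n] Ω) : IsOpen (Uset Ω) :=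
  tsopen_iff.1 hΩop ⟨uI, uI_mem⟩

lemma aff_neg (x y : Fin n → ℝ) (I : Oct) : aff x (-y) I = aff x y (-I) := by
  funext m
  show x m • (1:Oct) + (-y) m • I = x m • (1:Oct) + y m • (-I)
  rw [Pi.neg_apply, neg_smul, smul_neg]

lemma U_symm (hax : AxSymm n Ω) {p : (Fin n → ℝ) × (Fin n → ℝ)} (hp : p ∈ Uset Ω) :
    ((p.1, -p.2) : (Fin n → ℝ) × (Fin n → ℝ)) ∈ Uset Ω := by
  have h1 : aff p.1 p.2 (-uI) ∈ Ω := (mem_U_iff hax (Oct.sph_neg uI_mem)).1 hp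
  show aff p.1 (-p.2) uI ∈ Ω
  rw [aff_neg]
  exact h1

lemma cone_elim {q : Fin n → Oct} (h : q ∈ cone n) :
    ∃ I ∈ Sph, ∃ x y : Fin n → ℝ, q = aff x y I := by
  rw [cone, Set.mem_iUnion₂] at h
  obtain ⟨I, hI, hq⟩ := h
  obtain ⟨x, y, hxy⟩ := hq
  exact ⟨I, hI, x, y, hxy⟩

lemma U_nonempty (hΩ : SliceDomain n Ω) (hax : AxSymm n Ω) : (Uset Ω).Nonempty := by
  obtain ⟨q, hq⟩ := hΩ.2.1
  obtain ⟨I, hI, x, y, rfl⟩ := cone_elim (hΩ.1.1 hq)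
  exact ⟨(x, y), (mem_U_iff hax hI).2 hq⟩

/-- An axially symmetric slice domain contains real points. -/
lemma U_real (hΩ : SliceDomain n Ω) (hax : AxSymm n Ω) :
    ∃ x₀ : Fin n → ℝ, ((x₀, (0 : Fin n → ℝ)) : (Fin n → ℝ) × (Fin n → ℝ)) ∈ Uset Ω := by
  by_contra hno
  push_neg at hno
  have hnoreal : ∀ w ∈ Uset Ω, w.2 ≠ 0 := by
    rintro w hw h2
    exact hno w.1 (by rwa [show ((w.1, (0:Fin n → ℝ)) : (Fin n → ℝ) × (Fin n → ℝ)) = w by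
      rw [← h2]])
  obtain ⟨p₀, hp₀⟩ := U_nonempty hΩ hax
  set V₁ : Set (Fin n → Oct) :=
    {q | ∃ w ∈ Uset Ω, ∃ I ∈ Sph, (I = uI ∨ I = -uI) ∧ q = aff w.1 w.2 I} with hV₁
  set V₂ : Set (Fin n → Oct) :=
    {q | ∃ w ∈ Uset Ω, ∃ I ∈ Sph, (I ≠ uI ∧ I ≠ -uI) ∧ q = aff w.1 w.2 I} with hV₂
  have hV₁open : IsOpen[τs n] V₁ := by
    rw [tsopen_iff]
    rintro ⟨K, hK⟩
    by_cases hKc : K = uI ∨ K = -uI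
    · have : (fun p : (Fin n → ℝ) × (Fin n → ℝ) => aff p.1 p.2 K) ⁻¹' V₁ = Uset Ω := by
        ext w
        constructor
        · rintro ⟨w', hw'U, I, hI, hIc, heq⟩
          obtain ⟨hx, hcases⟩ := aff_cases hK hI heq
          rcases hcases with ⟨hy, hy'⟩ | ⟨hy, hII⟩ | ⟨hy, hII⟩
          · have : w = w' := by
              apply Prod.ext hx
              rw [hy, hy']
            rwa [this]
          · have : w = w' := Prod.ext hx hy
            rwa [this]
          · have : w = (w'.1, -w'.2) := by
              apply Prod.ext
              · exact hx
              · simpa using hy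
            rw [this]
            exact U_symm hax hw'U
        · intro hw
          exact ⟨w, hw, K, hK, hKc, rfl⟩
      rw [this]
      exact U_open hΩ.1.2
    · have : (fun p : (Fin n → ℝ) × (Fin n → ℝ) => aff p.1 p.2 K) ⁻¹' V₁ = ∅ := by
        ext w
        simp only [Set.mem_preimage, Set.mem_empty_iff_false, iff_false]
        rintro ⟨w', hw'U, I, hI, hIc, heq⟩
        obtain ⟨hx, hcases⟩ := aff_cases hK hI heq
        rcases hcases with ⟨hy, hy'⟩ | ⟨hy, hII⟩ | ⟨hy, hII⟩
        · exact hnoreal w' hw'U hy'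
        · rcases hIc with h | h
          · exact hKc (Or.inl (hII.trans h))
          · exact hKc (Or.inr (hII.trans h))
        · rcases hIc with h | h
          · exact hKc (Or.inr (by rw [hII, h]))
          · exact hKc (Or.inl (by rw [hII, h, neg_neg]))
      rw [this]
      exact isOpen_empty
  have hV₂open : IsOpen[τs n] V₂ := by
    rw [tsopen_iff]
    rintro ⟨K, hK⟩
    by_cases hKc : K = uI ∨ K = -uI
    · have : (fun p : (Fin n → ℝ) × (Fin n → ℝ) => aff p.1 p.2 K) ⁻¹' V₂ = ∅ := by
        ext w
        simp only [Set.mem_preimage, Set.mem_empty_iff_false, iff_false]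
        rintro ⟨w', hw'U, I, hI, ⟨hI1, hI2⟩, heq⟩
        obtain ⟨hx, hcases⟩ := aff_cases hK hI heq
        rcases hcases with ⟨hy, hy'⟩ | ⟨hy, hII⟩ | ⟨hy, hII⟩
        · exact hnoreal w' hw'U hy'
        · rcases hKc with h | h
          · exact hI1 (hII.symm.trans h)
          · exact hI2 (hII.symm.trans h)
        · rcases hKc with h | h
          · exact hI2 (by rw [← neg_neg I, ← hII, h])
          · exact hI1 (by rw [← neg_neg I, ← hII, h, neg_neg])
      rw [this]
      exact isOpen_empty
    · have : (fun p : (Fin n → ℝ) × (Fin n → ℝ) => aff p.1 p.2 K) ⁻¹' V₂ = Uset Ω := by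
        ext w
        constructor
        · rintro ⟨w', hw'U, I, hI, hIc, heq⟩
          obtain ⟨hx, hcases⟩ := aff_cases hK hI heq
          rcases hcases with ⟨hy, hy'⟩ | ⟨hy, hII⟩ | ⟨hy, hII⟩
          · have : w = w' := by
              apply Prod.ext hx
              rw [hy, hy']
            rwa [this]
          · have : w = w' := Prod.ext hx hy
            rwa [this]
          · have : w = (w'.1, -w'.2) := by
              apply Prod.ext
              · exact hx
              · simpa using hy
            rw [this]
            exact U_symm hax hw'U
        · intro hw
          push_neg at hKc
          exact ⟨w, hw, K, hK, hKc, rfl⟩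
      rw [this]
      exact U_open hΩ.1.2
  have hcover : Ω ⊆ V₁ ∪ V₂ := by
    intro q hq
    obtain ⟨I, hI, x, y, rfl⟩ := cone_elim (hΩ.1.1 hq)
    have hU : ((x,y) : (Fin n → ℝ) × (Fin n → ℝ)) ∈ Uset Ω := (mem_U_iff hax hI).2 hq
    by_cases hc : I = uI ∨ I = -uI
    · exact Or.inl ⟨(x,y), hU, I, hI, hc, rfl⟩
    · push_neg at hc
      exact Or.inr ⟨(x,y), hU, I, hI, hc, rfl⟩
  have hne₁ : (Ω ∩ V₁).Nonempty := by
    refine ⟨aff p₀.1 p₀.2 uI, (mem_U_iff hax uI_mem).1 hp₀, ?_⟩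
    exact ⟨p₀, hp₀, uI, uI_mem, Or.inl rfl, rfl⟩
  have hne₂ : (Ω ∩ V₂).Nonempty := by
    obtain ⟨K, hK, hK1, hK2⟩ := exists_third uI_mem
    refine ⟨aff p₀.1 p₀.2 K, (mem_U_iff hax hK).1 hp₀, ?_⟩
    exact ⟨p₀, hp₀, K, hK, ⟨hK1, hK2⟩, rfl⟩
  obtain ⟨z, hzΩ, hz₁, hz₂⟩ := hΩ.2.2 V₁ V₂ hV₁open hV₂open hcover hne₁ hne₂
  obtain ⟨w, hwU, I, hI, hIc, rfl⟩ := hz₁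
  obtain ⟨w', hw'U, I', hI', ⟨hI'1, hI'2⟩, heq⟩ := hz₂
  obtain ⟨hx, hcases⟩ := aff_cases hI hI' heq
  rcases hcases with ⟨hy, hy'⟩ | ⟨hy, hII⟩ | ⟨hy, hII⟩
  · exact hnoreal w hwU hy
  · rcases hIc with h | h
    · exact hI'1 (by rw [← hII, h])
    · exact hI'2 (by rw [← hII, h])
  · rcases hIc with h | h
    · exact hI'2 (by rw [← neg_neg I', ← hII, h])
    · exact hI'1 (by rw [← neg_neg I', ← hII, h, neg_neg])

/-- connected components of the parameter domain contain real points -/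
lemma comp_real (hΩ : SliceDomain n Ω) (hax : AxSymm n Ω)
    {p : (Fin n → ℝ) × (Fin n → ℝ)} (hp : p ∈ Uset Ω) :
    ∃ q ∈ connectedComponentIn (Uset Ω) p, q.2 = 0 := by
  by_contra hno
  push_neg at hno
  set U := Uset Ω with hUdef
  have hUopen : IsOpen U := U_open hΩ.1.2
  set C := connectedComponentIn U p with hCdef
  set S : ((Fin n → ℝ) × (Fin n → ℝ)) ≃ₜ ((Fin n → ℝ) × (Fin n → ℝ)) :=
    (Homeomorph.refl (Fin n → ℝ)).prodCongr (Homeomorph.neg (Fin n → ℝ)) with hSdef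
  have hSapp : ∀ w : (Fin n → ℝ) × (Fin n → ℝ), S w = (w.1, -w.2) := fun w => rfl
  have hSS : ∀ w, S (S w) = w := by
    intro w; rw [hSapp, hSapp]; apply Prod.ext
    · rfl
    · simp
  have hSU : ∀ w, w ∈ U ↔ S w ∈ U := by
    intro w
    constructor
    · intro h; rw [hSapp]; exact U_symm hax h
    · intro h
      have := U_symm hax h
      rw [hSapp] at this
      simp only [neg_neg] at this
      rwa [show ((w.1, w.2) : (Fin n → ℝ) × (Fin n → ℝ)) = w from rfl] at this
  set C' : Set ((Fin n → ℝ) × (Fin n → ℝ)) := C ∪ S '' C with hC'def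
  have hCopen : IsOpen C := hUopen.connectedComponentIn
  have hC'open : IsOpen C' := hCopen.union (S.isOpenMap _ hCopen)
  have hCU : C ⊆ U := connectedComponentIn_subset _ _
  have hC'U : C' ⊆ U := by
    rintro w (hw | ⟨v, hv, rfl⟩)
    · exact hCU hw
    · exact (hSU v).1 (hCU hv)
  have hC'noreal : ∀ w ∈ C', w.2 ≠ 0 := by
    rintro w (hw | ⟨v, hv, rfl⟩)
    · exact hno w hw
    · rw [hSapp]
      simp only [ne_eq, neg_eq_zero]
      exact hno v hv
  have hC'symm : ∀ w, w ∈ C' → S w ∈ C' := by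
    rintro w (hw | ⟨v, hv, rfl⟩)
    · exact Or.inr ⟨w, hw, rfl⟩
    · rw [hSS]; exact Or.inl hv
  have hUC'open : IsOpen (U \ C') := by
    rw [isOpen_iff_forall_mem_open]
    rintro q ⟨hqU, hqC'⟩
    refine ⟨connectedComponentIn U q, ?_, hUopen.connectedComponentIn,
      mem_connectedComponentIn hqU⟩
    intro z hz
    refine ⟨connectedComponentIn_subset _ _ hz, ?_⟩
    rintro (hzC | hzS)
    · have : connectedComponentIn U q = C := by
        rw [hCdef, connectedComponentIn_eq hz]
        exact (connectedComponentIn_eq hzC).symm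
      exact hqC' (Or.inl (this ▸ mem_connectedComponentIn hqU))
    · have hSimg : S '' U = U := by
        ext w
        constructor
        · rintro ⟨v, hv, rfl⟩
          exact (hSU v).1 hv
        · intro hw
          exact ⟨S w, (hSU w).1 hw, hSS w⟩
      have hSC : S '' C = connectedComponentIn U (S p) := by
        rw [hCdef, S.image_connectedComponentIn hp, hSimg]
      rw [hSC] at hzS
      have : connectedComponentIn U q = connectedComponentIn U (S p) := by
        rw [connectedComponentIn_eq hz]
        exact (connectedComponentIn_eq hzS).symm
      apply hqC'
      right
      rw [hSC, ← this]
      exact mem_connectedComponentIn hqU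
  -- disconnection
  set V₁ : Set (Fin n → Oct) :=
    {q | ∃ w ∈ C', ∃ I ∈ Sph, q = aff w.1 w.2 I} with hV₁
  set V₂ : Set (Fin n → Oct) :=
    {q | ∃ w ∈ U \ C', ∃ I ∈ Sph, q = aff w.1 w.2 I} with hV₂
  have hV₁open : IsOpen[τs n] V₁ := by
    rw [tsopen_iff]
    rintro ⟨K, hK⟩
    have : (fun p : (Fin n → ℝ) × (Fin n → ℝ) => aff p.1 p.2 K) ⁻¹' V₁ = C' := by
      ext w
      constructor
      · rintro ⟨w', hw'C', I, hI, heq⟩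
        obtain ⟨hx, hcases⟩ := aff_cases hK hI heq
        rcases hcases with ⟨hy, hy'⟩ | ⟨hy, hII⟩ | ⟨hy, hII⟩
        · exact absurd hy' (hC'noreal w' hw'C')
        · rwa [show w = w' from Prod.ext hx hy]
        · have : w = S w' := by
            rw [hSapp]
            refine Prod.ext hx ?_
            simpa using hy
          rw [this]
          exact hC'symm w' hw'C'
      · intro hw
        exact ⟨w, hw, K, hK, rfl⟩
    rw [this]
    exact hC'open
  have hV₂open : IsOpen[τs n] V₂ := by
    rw [tsopen_iff]
    rintro ⟨K, hK⟩
    have : (fun p : (Fin n → ℝ) × (Fin n → ℝ) => aff p.1 p.2 K) ⁻¹' V₂ = U \ C' := by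
      ext w
      constructor
      · rintro ⟨w', ⟨hw'U, hw'C'⟩, I, hI, heq⟩
        obtain ⟨hx, hcases⟩ := aff_cases hK hI heq
        rcases hcases with ⟨hy, hy'⟩ | ⟨hy, hII⟩ | ⟨hy, hII⟩
        · rw [show w = w' from Prod.ext hx (by rw [hy, hy'])]
          exact ⟨hw'U, hw'C'⟩
        · rw [show w = w' from Prod.ext hx hy]
          exact ⟨hw'U, hw'C'⟩
        · have hws : w = S w' := by
            rw [hSapp]; exact Prod.ext hx (by simpa using hy)
          rw [hws]
          refine ⟨(hSU w').1 hw'U, ?_⟩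
          intro hc
          have := hC'symm _ hc
          rw [hSS] at this
          exact hw'C' this
      · intro hw
        exact ⟨w, hw, K, hK, rfl⟩
    rw [this]
    exact hUC'open
  have hcover : Ω ⊆ V₁ ∪ V₂ := by
    intro q hq
    obtain ⟨I, hI, x, y, rfl⟩ := cone_elim (hΩ.1.1 hq)
    have hU : ((x,y) : (Fin n → ℝ) × (Fin n → ℝ)) ∈ U := (mem_U_iff hax hI).2 hq
    by_cases hc : ((x,y) : (Fin n → ℝ) × (Fin n → ℝ)) ∈ C'
    · exact Or.inl ⟨(x,y), hc, I, hI, rfl⟩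
    · exact Or.inr ⟨(x,y), ⟨hU, hc⟩, I, hI, rfl⟩
  have hne₁ : (Ω ∩ V₁).Nonempty := by
    refine ⟨aff p.1 p.2 uI, (mem_U_iff hax uI_mem).1 hp, ?_⟩
    exact ⟨p, Or.inl (mem_connectedComponentIn hp), uI, uI_mem, rfl⟩
  have hne₂ : (Ω ∩ V₂).Nonempty := by
    obtain ⟨x₀, hx₀⟩ := U_real hΩ hax
    refine ⟨aff x₀ 0 uI, (mem_U_iff hax uI_mem).1 hx₀, ?_⟩
    refine ⟨(x₀, 0), ⟨hx₀, ?_⟩, uI, uI_mem, rfl⟩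
    intro hc
    exact hC'noreal _ hc rfl
  obtain ⟨z, hzΩ, hz₁, hz₂⟩ := hΩ.2.2 V₁ V₂ hV₁open hV₂open hcover hne₁ hne₂
  obtain ⟨w, hwC', I, hI, rfl⟩ := hz₁
  obtain ⟨w', ⟨hw'U, hw'C'⟩, I', hI', heq⟩ := hz₂
  obtain ⟨hx, hcases⟩ := aff_cases hI hI' heq
  rcases hcases with ⟨hy, hy'⟩ | ⟨hy, hII⟩ | ⟨hy, hII⟩
  · exact hC'noreal w hwC' hy
  · exact hw'C' (by rw [← show w = w' from Prod.ext hx hy]; exact hwC')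
  · have : w' = S w := by
      rw [hSapp]
      refine Prod.ext hx.symm ?_
      have := congrArg Neg.neg hy
      rw [neg_neg] at this
      exact this.symm
    rw [this] at hw'C'
    exact hw'C' (hC'symm w hwC')

end Usets

section Construction
open Set Metric Oct

variable {n : ℕ}

def SLmap (n : ℕ) : ((Fin n → ℝ) × (Fin n → ℝ)) →L[ℝ] ((Fin n → ℝ) × (Fin n → ℝ)) :=
  (ContinuousLinearMap.fst ℝ (Fin n → ℝ) (Fin n → ℝ)).prod
    (-(ContinuousLinearMap.snd ℝ (Fin n → ℝ) (Fin n → ℝ)))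

@[simp] lemma SLmap_apply (p : (Fin n → ℝ) × (Fin n → ℝ)) : SLmap n p = (p.1, -p.2) := rfl

def lmulO (I : Oct) : Oct →L[ℝ] Oct :=
  LinearMap.toContinuousLinearMap
    { toFun := fun a => I * a
      map_add' := fun a b => Oct.mul_add' I a b
      map_smul' := fun s a => by simpa using Oct.mul_smul'' s I a }

@[simp] lemma lmulO_apply (I a : Oct) : lmulO I a = I * a := rfl

def gsl (n : ℕ) (f : (Fin n → Oct) → Oct) (I : Oct) : ((Fin n → ℝ) × (Fin n → ℝ)) → Oct :=
  fun p => f (aff p.1 p.2 I)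

def ufun (n : ℕ) (f : (Fin n → Oct) → Oct) (I : Oct) : ((Fin n → ℝ) × (Fin n → ℝ)) → Oct :=
  fun p => (2⁻¹ : ℝ) • (gsl n f I p + gsl n f I (SLmap n p))

def vfun (n : ℕ) (f : (Fin n → Oct) → Oct) (I : Oct) : ((Fin n → ℝ) × (Fin n → ℝ)) → Oct :=
  fun p => -((2⁻¹ : ℝ) • lmulO I (gsl n f I p - gsl n f I (SLmap n p)))

def hfun (n : ℕ) (f : (Fin n → Oct) → Oct) (I : Oct) :
    ((Fin n → ℝ) × (Fin n → ℝ)) → Oct × Oct :=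
  fun p => (ufun n f I p, vfun n f I p)

lemma SL_real {p : (Fin n → ℝ) × (Fin n → ℝ)} (hp : p.2 = 0) : SLmap n p = p := by
  refine Prod.ext rfl ?_
  show -p.2 = p.2
  rw [hp, neg_zero]

lemma hfun_real (f : (Fin n → Oct) → Oct) {I : Oct}
    {p : (Fin n → ℝ) × (Fin n → ℝ)} (hp : p.2 = 0) :
    hfun n f I p = (f (aff p.1 0 uI), 0) := by
  have hS := SL_real (n := n) hp
  refine Prod.ext ?_ ?_
  · show (2⁻¹ : ℝ) • (gsl n f I p + gsl n f I (SLmap n p)) = f (aff p.1 0 uI)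
    rw [hS]
    show (2⁻¹ : ℝ) • (f (aff p.1 p.2 I) + f (aff p.1 p.2 I)) = f (aff p.1 0 uI)
    rw [hp, aff_indep p.1 I uI]
    module
  · show -((2⁻¹ : ℝ) • lmulO I (gsl n f I p - gsl n f I (SLmap n p))) = 0
    rw [hS, sub_self, map_zero, smul_zero, neg_zero]

lemma reconstruct (f : (Fin n → Oct) → Oct) {I : Oct} (hI : I ∈ Sph)
    (p : (Fin n → ℝ) × (Fin n → ℝ)) :
    f (aff p.1 p.2 I) = ufun n f I p + I * vfun n f I p := by
  show f (aff p.1 p.2 I) =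
    (2⁻¹ : ℝ) • (gsl n f I p + gsl n f I (SLmap n p)) +
      I * -((2⁻¹ : ℝ) • lmulO I (gsl n f I p - gsl n f I (SLmap n p)))
  rw [Oct.mul_neg', Oct.mul_smul'', lmulO_apply, Oct.sph_mul_mul hI]
  show gsl n f I p = _
  module

lemma hfun_contDiffOn {f : (Fin n → Oct) → Oct} {I : Oct} {U : Set ((Fin n → ℝ) × (Fin n → ℝ))}
    (hC : ContDiffOn ℝ 1 (gsl n f I) U) (hsym : ∀ p ∈ U, SLmap n p ∈ U) :
    ContDiffOn ℝ 1 (hfun n f I) U := by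
  have hSL : ContDiffOn ℝ 1 (fun p : (Fin n → ℝ) × (Fin n → ℝ) => SLmap n p) U :=
    (SLmap n).contDiff.contDiffOn
  have hgS : ContDiffOn ℝ 1 (fun p => gsl n f I (SLmap n p)) U :=
    hC.comp hSL hsym
  have hu : ContDiffOn ℝ 1 (ufun n f I) U := (hC.add hgS).const_smul _
  have hv : ContDiffOn ℝ 1 (vfun n f I) U := by
    have h1 : ContDiffOn ℝ 1 (fun p => gsl n f I p - gsl n f I (SLmap n p)) U := hC.sub hgS
    have h2 : ContDiffOn ℝ 1 (fun p => lmulO I (gsl n f I p - gsl n f I (SLmap n p))) U :=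
      (lmulO I).contDiff.comp_contDiffOn h1
    exact (h2.const_smul _).neg
  exact hu.prodMk hv

lemma hfun_hasfderiv {f : (Fin n → Oct) → Oct} {I : Oct} {U : Set ((Fin n → ℝ) × (Fin n → ℝ))}
    (hUopen : IsOpen U) (hC : ContDiffOn ℝ 1 (gsl n f I) U)
    (hsym : ∀ p ∈ U, SLmap n p ∈ U) {p : (Fin n → ℝ) × (Fin n → ℝ)} (hp : p ∈ U) :
    HasFDerivAt (hfun n f I)
      ((((2⁻¹:ℝ) • (fderiv ℝ (gsl n f I) p +
          (fderiv ℝ (gsl n f I) (SLmap n p)).comp (SLmap n)))).prod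
        (-((2⁻¹:ℝ) • ((lmulO I).comp (fderiv ℝ (gsl n f I) p -
          (fderiv ℝ (gsl n f I) (SLmap n p)).comp (SLmap n)))))) p := by
  have hg : HasFDerivAt (gsl n f I) (fderiv ℝ (gsl n f I) p) p :=
    (((hC.contDiffAt (hUopen.mem_nhds hp)).differentiableAt one_ne_zero)).hasFDerivAt
  have hg0 : HasFDerivAt (gsl n f I) (fderiv ℝ (gsl n f I) (SLmap n p)) (SLmap n p) :=
    (((hC.contDiffAt (hUopen.mem_nhds (hsym p hp))).differentiableAt one_ne_zero)).hasFDerivAt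
  have hgS : HasFDerivAt (fun q => gsl n f I (SLmap n q))
      ((fderiv ℝ (gsl n f I) (SLmap n p)).comp (SLmap n)) p :=
    hg0.comp p ((SLmap n).hasFDerivAt)
  have hu : HasFDerivAt (ufun n f I)
      ((2⁻¹:ℝ) • (fderiv ℝ (gsl n f I) p + (fderiv ℝ (gsl n f I) (SLmap n p)).comp (SLmap n))) p :=
    (hg.add hgS).const_smul (2⁻¹:ℝ)
  have hv : HasFDerivAt (vfun n f I)
      (-((2⁻¹:ℝ) • ((lmulO I).comp (fderiv ℝ (gsl n f I) p -
        (fderiv ℝ (gsl n f I) (SLmap n p)).comp (SLmap n))))) p := by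
    have h1 : HasFDerivAt (fun q => gsl n f I q - gsl n f I (SLmap n q))
        (fderiv ℝ (gsl n f I) p - (fderiv ℝ (gsl n f I) (SLmap n p)).comp (SLmap n)) p :=
      hg.sub hgS
    have h2 : HasFDerivAt (fun q => lmulO I (gsl n f I q - gsl n f I (SLmap n q)))
        ((lmulO I).comp (fderiv ℝ (gsl n f I) p -
          (fderiv ℝ (gsl n f I) (SLmap n p)).comp (SLmap n))) p :=
      (lmulO I).hasFDerivAt.comp p h1
    exact (h2.const_smul (2⁻¹:ℝ)).neg
  exact hu.prodMk hv

lemma cr_flip {I A B : Oct} (hI : I ∈ Sph) (h : A + I * B = 0) : B = I * A := by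
  have h2 := congrArg (fun w => I * w) h
  rw [Oct.mul_add', Oct.sph_mul_mul hI, Oct.mul_zero'] at h2
  have h3 : I * A - B = 0 := by rw [sub_eq_add_neg]; exact h2
  exact (sub_eq_zero.1 h3).symm

lemma pair_neg_single (m : Fin n) :
    (((0 : Fin n → ℝ), -(Pi.single m 1 : Fin n → ℝ)) : (Fin n → ℝ) × (Fin n → ℝ)) =
      -(((0 : Fin n → ℝ), (Pi.single m 1 : Fin n → ℝ))) := by
  refine Prod.ext ?_ rfl
  show (0 : Fin n → ℝ) = -0
  rw [neg_zero]

lemma hfun_cr {f : (Fin n → Oct) → Oct} {I : Oct} (hI : I ∈ Sph)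
    {U : Set ((Fin n → ℝ) × (Fin n → ℝ))}
    (hUopen : IsOpen U) (hC : ContDiffOn ℝ 1 (gsl n f I) U)
    (hsym : ∀ p ∈ U, SLmap n p ∈ U)
    (hcr : ∀ q ∈ U, ∀ m : Fin n, fderiv ℝ (gsl n f I) q (Pi.single m 1, 0) +
      I * fderiv ℝ (gsl n f I) q (0, Pi.single m 1) = 0)
    {p : (Fin n → ℝ) × (Fin n → ℝ)} (hp : p ∈ U) (m : Fin n) :
    fderiv ℝ (hfun n f I) p (0, Pi.single m 1) =
      sigF (fderiv ℝ (hfun n f I) p (Pi.single m 1, 0)) := by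
  rw [(hfun_hasfderiv hUopen hC hsym hp).fderiv]
  set Dp := fderiv ℝ (gsl n f I) p with hDp
  set Ds := fderiv ℝ (gsl n f I) (SLmap n p) with hDs
  have hA : Dp (0, Pi.single m 1) = I * Dp (Pi.single m 1, 0) :=
    cr_flip hI (hcr p hp m)
  have hB : Ds (0, Pi.single m 1) = I * Ds (Pi.single m 1, 0) :=
    cr_flip hI (hcr _ (hsym p hp) m)
  have hSL1 : SLmap n ((Pi.single m 1, 0) : (Fin n → ℝ) × (Fin n → ℝ)) = (Pi.single m 1, 0) := by
    refine Prod.ext rfl ?_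
    show -(0 : Fin n → ℝ) = 0
    rw [neg_zero]
  have hSL2 : SLmap n (((0 : Fin n → ℝ), Pi.single m 1) : (Fin n → ℝ) × (Fin n → ℝ)) =
      -(((0 : Fin n → ℝ), Pi.single m 1)) := by
    rw [SLmap_apply, pair_neg_single]
  simp only [ContinuousLinearMap.prod_apply, ContinuousLinearMap.smul_apply,
    ContinuousLinearMap.add_apply, ContinuousLinearMap.sub_apply,
    ContinuousLinearMap.coe_comp', Function.comp_apply, ContinuousLinearMap.neg_apply,
    sigF_apply, hSL1, hSL2, map_neg, lmulO_apply]
  rw [hA, hB]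
  set a := Dp (Pi.single m 1, 0)
  set b := Ds (Pi.single m 1, 0)
  refine Prod.ext ?_ ?_
  · show (2⁻¹:ℝ) • (I * a + -(I * b)) = -(-((2⁻¹:ℝ) • (I * (a - b))))
    rw [neg_neg, Oct.mul_sub']
    rw [sub_eq_add_neg]
  · show -((2⁻¹:ℝ) • (I * (I * a - -(I * b)))) = (2⁻¹:ℝ) • (a + b)
    rw [sub_neg_eq_add, ← Oct.mul_add', Oct.sph_mul_mul hI]
    rw [smul_neg, neg_neg]

end Construction

/-- A weak slice regular function on an axially symmetric
slice-domain is a slice function. -/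
theorem weak_slice_regular_is_slice_function (n : ℕ) (hn : 1 ≤ n)
    (Ω : Set (Fin n → Oct)) (hΩ : SliceDomain n Ω) (hax : AxSymm n Ω)
    (f : (Fin n → Oct) → Oct) (hf : WSliceReg n Ω f) :
    IsSliceFun n Ω f := by
  classical
  have hUopen : IsOpen (Uset Ω) := U_open hΩ.1.2
  have hsym : ∀ p ∈ Uset Ω, SLmap n p ∈ Uset Ω := by
    intro p hp
    rw [SLmap_apply]
    exact U_symm hax hp
  have hdata : ∀ I, I ∈ Sph → ContDiffOn ℝ 1 (gsl n f I) (Uset Ω) ∧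
      (∀ q ∈ Uset Ω, ∀ m : Fin n, fderiv ℝ (gsl n f I) q (Pi.single m 1, 0) +
        I * fderiv ℝ (gsl n f I) q (0, Pi.single m 1) = 0) := by
    intro I hI
    have hset : {p : (Fin n → ℝ) × (Fin n → ℝ) | aff p.1 p.2 I ∈ Ω} = Uset Ω := by
      ext p
      exact (mem_U_iff hax hI).symm
    have h := hf I hI
    rw [Holo, hset] at h
    exact ⟨h.1, h.2⟩
  refine ⟨ufun n f uI, vfun n f uI, ?_⟩
  rintro x y hxy I hI hmem
  set p : (Fin n → ℝ) × (Fin n → ℝ) := (x, y) with hpdef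
  have hpU : p ∈ Uset Ω := (mem_U_iff hax hI).2 hmem
  set h : ((Fin n → ℝ) × (Fin n → ℝ)) → Oct × Oct :=
    fun q => hfun n f I q - hfun n f uI q with hhdef
  obtain ⟨hCg, hcrg⟩ := hdata I hI
  obtain ⟨hCg0, hcrg0⟩ := hdata uI uI_mem
  have hCh : ContDiffOn ℝ 1 h (Uset Ω) :=
    (hfun_contDiffOn hCg hsym).sub (hfun_contDiffOn hCg0 hsym)
  have hcrh : ∀ q ∈ Uset Ω, ∀ v, fderiv ℝ h q (Jmap n v) = sigF (fderiv ℝ h q v) := by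
    intro q hq v
    refine cr_linear ?_ v
    intro m
    have hd1 : DifferentiableAt ℝ (hfun n f I) q :=
      (hfun_hasfderiv hUopen hCg hsym hq).differentiableAt
    have hd2 : DifferentiableAt ℝ (hfun n f uI) q :=
      (hfun_hasfderiv hUopen hCg0 hsym hq).differentiableAt
    rw [hhdef, fderiv_fun_sub hd1 hd2]
    simp only [ContinuousLinearMap.sub_apply]
    rw [hfun_cr hI hUopen hCg hsym hcrg hq m, hfun_cr uI_mem hUopen hCg0 hsym hcrg0 hq m,
      ← map_sub]
  have hreal : ∀ q ∈ Uset Ω, q.2 = 0 → h q = 0 := by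
    intro q hq hq2
    show hfun n f I q - hfun n f uI q = 0
    rw [hfun_real f hq2, hfun_real f hq2, sub_self]
  set C := connectedComponentIn (Uset Ω) p with hCdef
  have hCopen : IsOpen C := hUopen.connectedComponentIn
  have hCsub : C ⊆ Uset Ω := connectedComponentIn_subset _ _
  have hCconn : IsPreconnected C :=
    (isConnected_connectedComponentIn_iff.2 hpU).isPreconnected
  obtain ⟨q0, hq0C, hq02⟩ := comp_real hΩ hax hpU
  obtain ⟨ε, hε, hball⟩ := Metric.isOpen_iff.1 hCopen q0 hq0C
  have hzeros : ∀ w ∈ Metric.ball q0 ε, w.2 = 0 → h w = 0 :=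
    fun w hw hw2 => hreal w (hCsub (hball hw)) hw2
  have hloc := local_vanish hUopen hCh hcrh hq02 hε (subset_trans hball hCsub) hzeros
  have hglob := global_vanish hUopen hCh hcrh hCopen hCconn hCsub hq0C
    (by positivity : (0:ℝ) < ε / 4 ^ n) hloc
  have hp0 : h p = 0 := hglob p (mem_connectedComponentIn hpU)
  have hpair : hfun n f I p = hfun n f uI p := sub_eq_zero.1 hp0
  have hu : ufun n f I p = ufun n f uI p := congrArg Prod.fst hpair
  have hv : vfun n f I p = vfun n f uI p := congrArg Prod.snd hpair
  have hrec := reconstruct f hI p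
  rw [hu, hv] at hrec
  exact hrec

end
end

section
/- Let r, s ∈ 𝕆 and I ∈ 𝕊 be such that r·s̄ ∈ ℂ_I. Then for every J ∈ 𝕊, min(|r + I·s|, |r − I·s|) ≤ |r + J·s| ≤ max(|r + I·s|, |r − I·s|). -/
/-! Octonions via the Cayley–Dickson construction on the quaternions,
the n-dimensional quadratic cone, the slice topology, and slice regularity. -/

noncomputable section
open Quaternion Topology

open Oct

namespace OctAux
open scoped RealInnerProductSpace

lemma c1_mul (p q : Oct) : c1 (p*q) = c1 p * c1 q - star (c2 q) * c2 p := rfl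
lemma c2_mul (p q : Oct) : c2 (p*q) = c2 q * c1 p + c2 p * star (c1 q) := rfl
lemma c1_star (p : Oct) : c1 (star p) = star (c1 p) := rfl
lemma c2_star (p : Oct) : c2 (star p) = -(c2 p) := rfl
lemma c1_one : c1 (1 : Oct) = 1 := rfl
lemma c2_one : c2 (1 : Oct) = 0 := rfl
lemma c1_neg (p : Oct) : c1 (-p) = -(c1 p) := rfl
lemma c2_neg (p : Oct) : c2 (-p) = -(c2 p) := rfl

lemma inner_c (p q : Oct) : ⟪p, q⟫ = ⟪c1 p, c1 q⟫ + ⟪c2 p, c2 q⟫ := rfl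

lemma norm_sq_c (p : Oct) : ‖p‖^2 = ‖c1 p‖^2 + ‖c2 p‖^2 :=
  WithLp.prod_norm_sq_eq_of_L2 p

lemma re_comm (x y : ℍ) : (x*y).re = (y*x).re := by
  simp [Quaternion.re_mul]; ring

lemma q1 (a b c : ℍ) : ⟪a, b*c⟫ = ⟪a * star c, b⟫ := by
  rw [Quaternion.inner_def, Quaternion.inner_def, star_mul, mul_assoc]

lemma q2 (a b c : ℍ) : ⟪a, b*c⟫ = ⟪star b * a, c⟫ := by
  rw [Quaternion.inner_def, Quaternion.inner_def, star_mul, ← mul_assoc, re_comm, mul_assoc]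

lemma q3 (a b c d : ℍ) : ⟪a*c, star d * b⟫ = ⟪d*a, b * star c⟫ := by
  simp only [Quaternion.inner_def, star_mul, star_star, ← mul_assoc]
  rw [re_comm]
  simp [mul_assoc]

lemma key_inner (r s J : Oct) : ⟪r, J*s⟫ = ⟪r * star s, J⟫ := by
  rw [inner_c, inner_c, c1_mul, c2_mul, c1_mul, c2_mul, c1_star, c2_star]
  simp only [star_neg, star_star, neg_mul, mul_neg, sub_neg_eq_add, neg_neg]
  rw [inner_sub_right, inner_add_right, inner_add_left, inner_add_left,
    q1 (c1 r) (c1 J) (c1 s), q2 (c1 r) (star (c2 s)) (c2 J), star_star,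
    q2 (c2 r) (c2 s) (c1 J), q1 (c2 r) (c2 J) (star (c1 s)), star_star]
  rw [inner_neg_left]
  ring

lemma norm_sq_mul (p q : Oct) : ‖p*q‖^2 = ‖p‖^2 * ‖q‖^2 := by
  rw [norm_sq_c, norm_sq_c p, norm_sq_c q, c1_mul, c2_mul,
    norm_sub_sq_real, norm_add_sq_real,
    q3 (c1 p) (c2 p) (c1 q) (c2 q)]
  simp only [norm_mul, Quaternion.norm_star, mul_pow]
  ring

lemma one_norm : ‖(1:Oct)‖^2 = 1 := by
  rw [norm_sq_c, c1_one, c2_one]; simp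

lemma sph_norm {K : Oct} (hK : K ∈ Sph) : ‖K‖ = 1 := by
  have h2 : ‖K‖^2 * ‖K‖^2 = 1 := by
    rw [← norm_sq_mul, hK, norm_neg, one_norm]
  have h3 : ‖K‖^2 = 1 := by nlinarith [sq_nonneg (‖K‖^2 - 1), sq_nonneg (‖K‖^2 + 1)]
  nlinarith [norm_nonneg K, sq_nonneg (‖K‖ - 1), sq_nonneg (‖K‖ + 1)]

lemma sph_re {K : Oct} (hK : K ∈ Sph) : ⟪K, (1:Oct)⟫ = 0 := by
  have hre : (c1 K).re = 0 := by
    have hK' : K * K = -1 := hK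
    have h1 : c1 K * c1 K - star (c2 K) * c2 K = -1 := by
      rw [← c1_mul, hK', c1_neg, c1_one]
    have h2 : c2 K * c1 K + c2 K * star (c1 K) = 0 := by
      rw [← c2_mul, hK', c2_neg, c2_one, neg_zero]
    rw [← mul_add, Quaternion.self_add_star'] at h2
    rcases mul_eq_zero.mp h2 with h0 | h0
    · rw [h0, star_zero, zero_mul, sub_zero] at h1
      by_contra hre
      have hext := Quaternion.ext_iff.mp h1
      simp only [Quaternion.re_mul, Quaternion.imI_mul, Quaternion.imJ_mul,
        Quaternion.imK_mul, Quaternion.re_neg, Quaternion.imI_neg, Quaternion.imJ_neg,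
        Quaternion.imK_neg, Quaternion.re_one, Quaternion.imI_one, Quaternion.imJ_one,
        Quaternion.imK_one, neg_zero] at hext
      obtain ⟨hA, hB, hC, hD⟩ := hext
      have hi : (c1 K).imI = 0 := by
        have : (c1 K).re * (c1 K).imI = 0 := by linarith
        exact (mul_eq_zero.mp this).resolve_left hre
      have hj : (c1 K).imJ = 0 := by
        have : (c1 K).re * (c1 K).imJ = 0 := by linarith
        exact (mul_eq_zero.mp this).resolve_left hre
      have hk : (c1 K).imK = 0 := by
        have : (c1 K).re * (c1 K).imK = 0 := by linarith
        exact (mul_eq_zero.mp this).resolve_left hre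
      rw [hi, hj, hk] at hA
      nlinarith [sq_nonneg ((c1 K).re)]
    · have : (2 : ℝ) * (c1 K).re = 0 := by
        exact_mod_cast Quaternion.coe_injective (by simpa using h0)
      linarith
  rw [inner_c, c1_one, c2_one, inner_zero_right, add_zero, Quaternion.inner_def,
    star_one, mul_one, hre]

end OctAux

open scoped RealInnerProductSpace in
/-- If `r s̄ ∈ ℂ_I` for some `I ∈ 𝕊`, then for every `J ∈ 𝕊`,
`min(|r + I s|, |r − I s|) ≤ |r + J s| ≤ max(|r + I s|, |r − I s|)`. -/
theorem norm_add_smul_unit_bounds (r s I : Oct) (hI : I ∈ Sph)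
    (h : r * star s ∈ CI I) :
    ∀ J ∈ Sph,
      min ‖r + I * s‖ ‖r - I * s‖ ≤ ‖r + J * s‖ ∧
      ‖r + J * s‖ ≤ max ‖r + I * s‖ ‖r - I * s‖ := by
  obtain ⟨u, v, huv⟩ := h
  intro J hJ
  have hI1 := OctAux.sph_norm hI
  have hIre := OctAux.sph_re hI
  have hJ1 := OctAux.sph_norm hJ
  have hJre := OctAux.sph_re hJ
  have hIre' : ⟪(1:Oct), I⟫ = 0 := by rw [real_inner_comm]; exact hIre
  have hJre' : ⟪(1:Oct), J⟫ = 0 := by rw [real_inner_comm]; exact hJre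
  have hA : ⟪r * star s, I⟫ = v := by
    rw [huv, inner_add_left, real_inner_smul_left, real_inner_smul_left,
      hIre', real_inner_self_eq_norm_sq, hI1]
    ring
  have hB : ⟪r * star s, J⟫ = v * ⟪I, J⟫ := by
    rw [huv, inner_add_left, real_inner_smul_left, real_inner_smul_left,
      hJre']
    ring
  have e1 : ‖r + I*s‖^2 = ‖r‖^2 + ‖s‖^2 + 2*v := by
    rw [norm_add_sq_real, OctAux.key_inner, hA, OctAux.norm_sq_mul, hI1]; ring
  have e2 : ‖r - I*s‖^2 = ‖r‖^2 + ‖s‖^2 - 2*v := by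
    rw [norm_sub_sq_real, OctAux.key_inner, hA, OctAux.norm_sq_mul, hI1]; ring
  have e3 : ‖r + J*s‖^2 = ‖r‖^2 + ‖s‖^2 + 2*(v * ⟪I, J⟫) := by
    rw [norm_add_sq_real, OctAux.key_inner, hB, OctAux.norm_sq_mul, hJ1]; ring
  have hCS : |⟪I, J⟫| ≤ 1 := by
    have := abs_real_inner_le_norm I J
    rw [hI1, hJ1] at this
    simpa using this
  obtain ⟨ht1, ht2⟩ := abs_le.mp hCS
  rcases le_total 0 v with hv | hv
  · constructor
    · refine le_trans (min_le_right _ _) ?_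
      refine le_of_pow_le_pow_left₀ two_ne_zero (norm_nonneg _) ?_
      nlinarith [mul_nonneg hv (by linarith : (0:ℝ) ≤ ⟪I, J⟫ + 1)]
    · refine le_trans ?_ (le_max_left _ _)
      refine le_of_pow_le_pow_left₀ two_ne_zero (norm_nonneg _) ?_
      nlinarith [mul_nonneg hv (by linarith : (0:ℝ) ≤ 1 - ⟪I, J⟫)]
  · constructor
    · refine le_trans (min_le_left _ _) ?_
      refine le_of_pow_le_pow_left₀ two_ne_zero (norm_nonneg _) ?_
      nlinarith [mul_nonneg (neg_nonneg.mpr hv) (by linarith : (0:ℝ) ≤ 1 - ⟪I, J⟫)]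
    · refine le_trans ?_ (le_max_right _ _)
      refine le_of_pow_le_pow_left₀ two_ne_zero (norm_nonneg _) ?_
      nlinarith [mul_nonneg (neg_nonneg.mpr hv) (by linarith : (0:ℝ) ≤ ⟪I, J⟫ + 1)]


end
end
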